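/- arXiv:1510.06420 — 6 statements merged into one kernel-verified Lean document; each statement's English description precedes it below -/
import Mathlib

section
/- For positive real numbers a and b, the integral over η from 0 to 2π of dη/√(a² + b² − 2ab·cos η) equals 4 times the integral over t from 0 to min(a,b) of dt/(√(a² − t²)·√(b² − t²)). -/
open Real intervalIntegral MeasureTheory Set Filter

-- positivity of the quadratic form
lemma form_pos {p q : ℝ} (hp : 0 < p) (hq : 0 < q) (θ : ℝ) :
    0 < p^2 * Real.cos θ^2 + q^2 * Real.sin θ^2 := by
  rcases le_total p q with h | h
  · have hpq : p^2 ≤ q^2 := by nlinarith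
    nlinarith [mul_nonneg (sub_nonneg.2 hpq) (sq_nonneg (Real.sin θ)),
      Real.sin_sq_add_cos_sq θ, pow_pos hp 2]
  · have hpq : q^2 ≤ p^2 := by nlinarith
    nlinarith [mul_nonneg (sub_nonneg.2 hpq) (sq_nonneg (Real.cos θ)),
      Real.sin_sq_add_cos_sq θ, pow_pos hq 2]

lemma form_cont {p q : ℝ} (hp : 0 < p) (hq : 0 < q) :
    Continuous (fun θ : ℝ => 1 / Real.sqrt (p^2 * Real.cos θ^2 + q^2 * Real.sin θ^2)) := by
  apply continuous_const.div
  · exact (Real.continuous_sqrt.comp (by continuity))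
  · intro θ
    exact (Real.sqrt_pos.2 (form_pos hp hq θ)).ne'

lemma form_pos' {p q : ℝ} (hp : 0 < p) (hq : 0 < q) (θ : ℝ) :
    0 < ((p+q)/2)^2 * Real.cos θ^2 + (p*q) * Real.sin θ^2 := by
  have h := form_pos (p := (p+q)/2) (q := Real.sqrt (p*q)) (by positivity)
    (Real.sqrt_pos.2 (by positivity)) θ
  rwa [Real.sq_sqrt (by positivity : (0:ℝ) ≤ p*q)] at h

lemma form_cont' {p q : ℝ} (hp : 0 < p) (hq : 0 < q) :
    Continuous (fun θ : ℝ => 1 / Real.sqrt (((p+q)/2)^2 * Real.cos θ^2 + (p*q) * Real.sin θ^2)) := by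
  apply continuous_const.div
  · exact (Real.continuous_sqrt.comp (by continuity))
  · intro θ
    exact (Real.sqrt_pos.2 (form_pos' hp hq θ)).ne'

lemma even_half {p q : ℝ} (hp : 0 < p) (hq : 0 < q) :
    ∫ y in (-(π/2))..(π/2), 1 / Real.sqrt (((p+q)/2)^2 * Real.cos y^2 + (p*q) * Real.sin y^2)
      = 2 * ∫ y in (0:ℝ)..(π/2), 1 / Real.sqrt (((p+q)/2)^2 * Real.cos y^2 + (p*q) * Real.sin y^2) := by
  have hc := form_cont' hp hq
  rw [← intervalIntegral.integral_add_adjacent_intervals (a := -(π/2)) (b := (0:ℝ)) (c := π/2)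
    (hc.intervalIntegrable _ _) (hc.intervalIntegrable _ _)]
  have h1 : ∫ y in (-(π/2))..(0:ℝ), 1 / Real.sqrt (((p+q)/2)^2 * Real.cos y^2 + (p*q) * Real.sin y^2)
      = ∫ y in (0:ℝ)..(π/2), 1 / Real.sqrt (((p+q)/2)^2 * Real.cos y^2 + (p*q) * Real.sin y^2) := by
    have h2 := intervalIntegral.integral_comp_neg
      (fun y => 1 / Real.sqrt (((p+q)/2)^2 * Real.cos y^2 + (p*q) * Real.sin y^2)) (a := (0:ℝ)) (b := π/2)
    simp only [Real.cos_neg, Real.sin_neg, neg_zero] at h2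
    rw [← h2]
    congr 1
    ext y
    rw [neg_sq]
  rw [h1]; ring

lemma landen {p q : ℝ} (hp : 0 < p) (hq : 0 < q) :
    ∫ θ in (0:ℝ)..(π/2), 1 / Real.sqrt (p^2 * Real.cos θ^2 + q^2 * Real.sin θ^2)
      = ∫ θ in (0:ℝ)..(π/2), 1 / Real.sqrt (((p+q)/2)^2 * Real.cos θ^2 + (p*q) * Real.sin θ^2) := by
  have hpi2 : (0:ℝ) < π/2 := by positivity
  have hpq : (0:ℝ) < p*q := by positivity
  set G : ℝ := Real.sqrt (p*q) with hGdef
  have hG : 0 < G := Real.sqrt_pos.2 hpq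
  have hG2 : G^2 = p*q := Real.sq_sqrt hpq.le
  set u : ℝ → ℝ := fun θ => (q * Real.tan θ - p * (Real.tan θ)⁻¹) / 2 with hudef
  set Φ : ℝ → ℝ := fun θ => Real.arctan (u θ / G) with hΦdef
  set Φ' : ℝ → ℝ := fun θ => 2*G / (q * Real.sin θ^2 + p * Real.cos θ^2) with hΦ'def
  -- pointwise facts on the open interval
  have hbasic : ∀ θ ∈ Ioo (0:ℝ) (π/2), 0 < Real.sin θ ∧ 0 < Real.cos θ := by
    intro θ hθ
    obtain ⟨h1, h2⟩ := hθ
    constructor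
    · exact Real.sin_pos_of_pos_of_lt_pi h1 (by linarith [Real.pi_pos])
    · exact Real.cos_pos_of_mem_Ioo ⟨by linarith, h2⟩
  have huval : ∀ θ ∈ Ioo (0:ℝ) (π/2),
      u θ = (q * Real.sin θ^2 - p * Real.cos θ^2) / (2 * Real.sin θ * Real.cos θ) := by
    intro θ hθ
    obtain ⟨hs, hc⟩ := hbasic θ hθ
    rw [hudef]
    simp only
    rw [Real.tan_eq_sin_div_cos]
    field_simp
  have hden : ∀ θ ∈ Ioo (0:ℝ) (π/2), 0 < q * Real.sin θ^2 + p * Real.cos θ^2 := by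
    intro θ hθ
    obtain ⟨hs, hc⟩ := hbasic θ hθ
    exact add_pos (mul_pos hq (pow_pos hs 2)) (mul_pos hp (pow_pos hc 2))
  have hΦ'pos : ∀ θ ∈ Ioo (0:ℝ) (π/2), 0 < Φ' θ := by
    intro θ hθ
    exact div_pos (by positivity) (hden θ hθ)
  -- derivative
  have hderiv : ∀ θ ∈ Ioo (0:ℝ) (π/2), HasDerivAt Φ (Φ' θ) θ := by
    intro θ hθ
    obtain ⟨hs, hc⟩ := hbasic θ hθ
    have htpos : 0 < Real.tan θ := by
      rw [Real.tan_eq_sin_div_cos]; positivity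
    have ht := Real.hasDerivAt_tan hc.ne'
    have h2 := ((ht.const_mul q).sub ((ht.inv htpos.ne').const_mul p)).div_const 2
    have h3 := h2.div_const G
    have h4 := (Real.hasDerivAt_arctan (u θ / G)).comp θ h3
    convert h4 using 1
    · rfl
    · rfl
    · rfl
    rw [Real.tan_eq_sin_div_cos]
    have hd := (hden θ hθ).ne'
    have hE : (q*Real.sin θ^2+p*Real.cos θ^2)^2
        = 4*Real.sin θ^2*Real.cos θ^2*G^2 + (q*Real.sin θ^2-p*Real.cos θ^2)^2 := by
      rw [hG2]; ring
    rw [hΦ'def]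
    simp only
    rw [hudef]
    simp only [Real.tan_eq_sin_div_cos]
    field_simp [hd]
    ring_nf
    linear_combination (4*Real.sin θ^2*Real.cos θ^2) * hG2
  -- strict monotonicity / injectivity
  have hmono : StrictMonoOn Φ (Ioo (0:ℝ) (π/2)) := by
    apply strictMonoOn_of_deriv_pos (convex_Ioo _ _)
    · intro x hx
      exact (hderiv x hx).continuousAt.continuousWithinAt
    · intro x hx
      rw [interior_Ioo] at hx
      rw [(hderiv x hx).deriv]
      exact hΦ'pos x hx
  have hinj : InjOn Φ (Ioo (0:ℝ) (π/2)) := hmono.injOn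
  -- image
  have himg : Φ '' (Ioo (0:ℝ) (π/2)) = Ioo (-(π/2)) (π/2) := by
    apply Subset.antisymm
    · rintro _ ⟨θ, _, rfl⟩
      exact Real.arctan_mem_Ioo _
    · rintro y hy
      set ty := Real.tan y with htydef
      set S := Real.sqrt (G^2*ty^2 + p*q) with hSdef
      have hS2 : S^2 = G^2*ty^2+p*q := Real.sq_sqrt (by positivity)
      have hSpos : 0 < S := Real.sqrt_pos.2 (by positivity)
      have hnum : 0 < G*ty + S := by
        nlinarith [hS2, hSpos, hpq, sq_nonneg (G*ty + S)]
      have hT : 0 < (G*ty + S)/q := div_pos hnum hq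
      set T := (G*ty+S)/q with hTdef
      set θ := Real.arctan T with hθdef
      have hθmem : θ ∈ Ioo (0:ℝ) (π/2) :=
        ⟨by rw [← Real.arctan_zero]; exact Real.arctan_strictMono hT,
         Real.arctan_lt_pi_div_two T⟩
      refine ⟨θ, hθmem, ?_⟩
      have htanθ : Real.tan θ = T := Real.tan_arctan T
      have hw : u θ / G = ty := by
        rw [hudef]
        simp only [htanθ, hTdef]
        have hGty : G*ty + S ≠ 0 := hnum.ne'
        field_simp
        ring_nf
        linear_combination hS2
      rw [hΦdef]
      simp only [hw]
      exact Real.arctan_tan hy.1 hy.2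
  -- change of variables
  have hcov := MeasureTheory.integral_image_eq_integral_abs_deriv_smul measurableSet_Ioo
      (fun x hx => (hderiv x hx).hasDerivWithinAt) hinj
      (fun y => 1 / Real.sqrt (((p+q)/2)^2 * Real.cos y^2 + (p*q) * Real.sin y^2))
  rw [himg] at hcov
  -- pointwise identity
  have hpt : ∀ θ ∈ Ioo (0:ℝ) (π/2),
      |Φ' θ| • (1 / Real.sqrt (((p+q)/2)^2 * Real.cos (Φ θ)^2 + (p*q) * Real.sin (Φ θ)^2))
        = 2 * (1 / Real.sqrt (p^2 * Real.cos θ^2 + q^2 * Real.sin θ^2)) := by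
    intro θ hθ
    obtain ⟨hs, hc⟩ := hbasic θ hθ
    have hd := hden θ hθ
    have hRpos := form_pos hp hq θ
    set R := Real.sqrt (p^2 * Real.cos θ^2 + q^2 * Real.sin θ^2) with hRdef
    have hR2 : R^2 = p^2 * Real.cos θ^2 + q^2 * Real.sin θ^2 := Real.sq_sqrt hRpos.le
    have hR : 0 < R := Real.sqrt_pos.2 hRpos
    have hsc := Real.sin_sq_add_cos_sq θ
    have hA' : (q*Real.sin θ^2+p*Real.cos θ^2)^2
        = (p*q + (u θ)^2)*(4*Real.sin θ^2*Real.cos θ^2) := by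
      rw [huval θ hθ]; field_simp; ring
    have hB' : p^2*Real.cos θ^2+q^2*Real.sin θ^2
        = (((p+q)/2)^2 + (u θ)^2)*(4*Real.sin θ^2*Real.cos θ^2) := by
      rw [huval θ hθ]; field_simp; ring_nf
      linear_combination (-4*(p^2*Real.cos θ^2 + q^2*Real.sin θ^2))*hsc
    have h1w : (0:ℝ) < 1 + (u θ/G)^2 := by positivity
    have hsq : Real.sqrt (1 + (u θ/G)^2)^2 = 1 + (u θ/G)^2 := Real.sq_sqrt h1w.le
    have hw2 : (u θ/G)^2 = u θ^2/(p*q) := by rw [div_pow, hG2]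
    have hApos : (0:ℝ) < p*q + (u θ)^2 := by positivity
    have e1 : Real.cos (Φ θ)^2 = (p*q)/(p*q + u θ^2) := by
      rw [hΦdef]
      simp only
      rw [Real.cos_arctan, div_pow, one_pow, hsq, hw2]
      field_simp
    have e2 : Real.sin (Φ θ)^2 = u θ^2/(p*q + u θ^2) := by
      rw [hΦdef]
      simp only
      rw [Real.sin_arctan, div_pow, hsq, hw2]
      field_simp
    have hX : ((p+q)/2)^2 * Real.cos (Φ θ)^2 + (p*q) * Real.sin (Φ θ)^2
        = (G * R / (q*Real.sin θ^2 + p*Real.cos θ^2))^2 := by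
      have hrhs : (G * R / (q*Real.sin θ^2+p*Real.cos θ^2))^2
          = (p*q)*(p^2*Real.cos θ^2+q^2*Real.sin θ^2)/((q*Real.sin θ^2+p*Real.cos θ^2)^2) := by
        rw [div_pow, mul_pow, hG2, hR2]
      rw [e1, e2, hrhs, hB', hA']
      field_simp
    rw [hX, Real.sqrt_sq (by positivity)]
    rw [abs_of_pos (hΦ'pos θ hθ), hΦ'def]
    simp only [smul_eq_mul]
    field_simp
  have hcong : (∫ θ in Ioo (0:ℝ) (π/2),
        |Φ' θ| • (1 / Real.sqrt (((p+q)/2)^2 * Real.cos (Φ θ)^2 + (p*q) * Real.sin (Φ θ)^2)))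
      = ∫ θ in Ioo (0:ℝ) (π/2), 2 * (1 / Real.sqrt (p^2 * Real.cos θ^2 + q^2 * Real.sin θ^2)) :=
    MeasureTheory.setIntegral_congr_fun measurableSet_Ioo (fun θ hθ => hpt θ hθ)
  have hL : (∫ θ in (0:ℝ)..(π/2), 1 / Real.sqrt (p^2 * Real.cos θ^2 + q^2 * Real.sin θ^2))
      = ∫ θ in Ioo (0:ℝ) (π/2), 1 / Real.sqrt (p^2 * Real.cos θ^2 + q^2 * Real.sin θ^2) := by
    rw [intervalIntegral.integral_of_le hpi2.le, MeasureTheory.integral_Ioc_eq_integral_Ioo]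
  have hH : (∫ y in (0:ℝ)..(π/2), 1 / Real.sqrt (((p+q)/2)^2 * Real.cos y^2 + (p*q) * Real.sin y^2))
      = ∫ y in Ioo (0:ℝ) (π/2), 1 / Real.sqrt (((p+q)/2)^2 * Real.cos y^2 + (p*q) * Real.sin y^2) := by
    rw [intervalIntegral.integral_of_le hpi2.le, MeasureTheory.integral_Ioc_eq_integral_Ioo]
  have hH2 : (∫ y in (-(π/2))..(π/2), 1 / Real.sqrt (((p+q)/2)^2 * Real.cos y^2 + (p*q) * Real.sin y^2))
      = ∫ y in Ioo (-(π/2)) (π/2), 1 / Real.sqrt (((p+q)/2)^2 * Real.cos y^2 + (p*q) * Real.sin y^2) := by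
    rw [intervalIntegral.integral_of_le (by linarith), MeasureTheory.integral_Ioc_eq_integral_Ioo]
  have h2L : (∫ θ in Ioo (0:ℝ) (π/2), 2 * (1 / Real.sqrt (p^2 * Real.cos θ^2 + q^2 * Real.sin θ^2)))
      = 2 * ∫ θ in Ioo (0:ℝ) (π/2), 1 / Real.sqrt (p^2 * Real.cos θ^2 + q^2 * Real.sin θ^2) :=
    MeasureTheory.integral_const_mul 2 _
  have heven := even_half hp hq
  rw [hH2] at heven
  rw [hcov, hcong, h2L] at heven
  rw [hL, hH]
  linarith [heven]

lemma rhs_sub {a b : ℝ} (ha : 0 < a) (hab : a < b) :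
    (∫ t in (0:ℝ)..a, 1 / (Real.sqrt (a^2 - t^2) * Real.sqrt (b^2 - t^2)))
      = ∫ θ in (0:ℝ)..(π/2), 1 / Real.sqrt (b^2 * Real.cos θ^2 + (b^2-a^2) * Real.sin θ^2) := by
  have hb : 0 < b := ha.trans hab
  have hpi2 : (0:ℝ) < π/2 := by positivity
  have hderiv : ∀ θ ∈ Ioo (0:ℝ) (π/2), HasDerivAt (fun θ => a * Real.sin θ) (a * Real.cos θ) θ :=
    fun θ _ => (Real.hasDerivAt_sin θ).const_mul a
  have hbasic : ∀ θ ∈ Ioo (0:ℝ) (π/2), 0 < Real.sin θ ∧ 0 < Real.cos θ := by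
    intro θ hθ
    obtain ⟨h1, h2⟩ := hθ
    exact ⟨Real.sin_pos_of_pos_of_lt_pi h1 (by linarith [Real.pi_pos]),
      Real.cos_pos_of_mem_Ioo ⟨by linarith, h2⟩⟩
  have hinj : InjOn (fun θ => a * Real.sin θ) (Ioo (0:ℝ) (π/2)) := by
    intro x hx y hy hxy
    simp only at hxy
    have hxy' : Real.sin x = Real.sin y := mul_left_cancel₀ ha.ne' hxy
    exact Real.injOn_sin ⟨by linarith [hx.1, hpi2], le_of_lt hx.2⟩
      ⟨by linarith [hy.1, hpi2], le_of_lt hy.2⟩ hxy'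
  have himg : (fun θ => a * Real.sin θ) '' (Ioo (0:ℝ) (π/2)) = Ioo 0 a := by
    ext y
    constructor
    · rintro ⟨θ, hθ, rfl⟩
      obtain ⟨hs, hc⟩ := hbasic θ hθ
      have hs1 : Real.sin θ < 1 := by
        have h6 := Real.strictMonoOn_sin (Set.mem_Icc.2 ⟨by linarith [hθ.1], hθ.2.le⟩)
          (Set.mem_Icc.2 ⟨by linarith, le_refl (π/2)⟩) hθ.2
        simpa using h6
      simp only [Set.mem_Ioo]
      constructor
      · positivity
      · nlinarith
    · intro hy
      have hy0 : 0 < y / a := div_pos hy.1 ha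
      have hy1 : y / a < 1 := (div_lt_one ha).2 hy.2
      refine ⟨Real.arcsin (y/a), ⟨Real.arcsin_pos.2 hy0, ?_⟩, ?_⟩
      · exact Real.arcsin_lt_pi_div_two.2 hy1
      · simp only
        rw [Real.sin_arcsin (by linarith) (by linarith)]
        field_simp
  have hcov := MeasureTheory.integral_image_eq_integral_abs_deriv_smul measurableSet_Ioo
      (fun x hx => (hderiv x hx).hasDerivWithinAt) hinj
      (fun t => 1 / (Real.sqrt (a^2 - t^2) * Real.sqrt (b^2 - t^2)))
  rw [himg] at hcov
  have hpt : ∀ θ ∈ Ioo (0:ℝ) (π/2),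
      |a * Real.cos θ| • (1 / (Real.sqrt (a^2 - (a*Real.sin θ)^2) * Real.sqrt (b^2 - (a*Real.sin θ)^2)))
        = 1 / Real.sqrt (b^2 * Real.cos θ^2 + (b^2-a^2) * Real.sin θ^2) := by
    intro θ hθ
    obtain ⟨hs, hc⟩ := hbasic θ hθ
    have hsc := Real.sin_sq_add_cos_sq θ
    have e1 : a^2 - (a*Real.sin θ)^2 = (a*Real.cos θ)^2 := by
      linear_combination (-(a^2)) * hsc
    have e2 : b^2 - (a*Real.sin θ)^2 = b^2 * Real.cos θ^2 + (b^2-a^2) * Real.sin θ^2 := by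
      linear_combination (-(b^2)) * hsc
    have h3 : 0 < b^2 * Real.cos θ^2 + (b^2-a^2) * Real.sin θ^2 := by
      nlinarith [sq_nonneg (Real.cos θ), sq_nonneg (Real.sin θ)]
    rw [e1, e2, Real.sqrt_sq (by positivity)]
    rw [abs_of_pos (by positivity), smul_eq_mul]
    have h4 : Real.sqrt (b^2 * Real.cos θ^2 + (b^2-a^2) * Real.sin θ^2) ≠ 0 :=
      (Real.sqrt_pos.2 h3).ne'
    have h5 : a * Real.cos θ ≠ 0 := by positivity
    field_simp
  have hcong : (∫ θ in Ioo (0:ℝ) (π/2),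
        |a * Real.cos θ| • (1 / (Real.sqrt (a^2 - (a*Real.sin θ)^2) * Real.sqrt (b^2 - (a*Real.sin θ)^2))))
      = ∫ θ in Ioo (0:ℝ) (π/2), 1 / Real.sqrt (b^2 * Real.cos θ^2 + (b^2-a^2) * Real.sin θ^2) :=
    MeasureTheory.setIntegral_congr_fun measurableSet_Ioo (fun θ hθ => hpt θ hθ)
  rw [intervalIntegral.integral_of_le ha.le, MeasureTheory.integral_Ioc_eq_integral_Ioo,
    intervalIntegral.integral_of_le hpi2.le, MeasureTheory.integral_Ioc_eq_integral_Ioo]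
  rw [hcov, hcong]

lemma lhs_red {a b : ℝ} (ha : 0 < a) (hab : a < b) :
    (∫ η in (0:ℝ)..(2*π), 1 / Real.sqrt (a^2 + b^2 - 2*a*b*Real.cos η))
      = 4 * ∫ θ in (0:ℝ)..(π/2), 1 / Real.sqrt ((b-a)^2 * Real.cos θ^2 + (b+a)^2 * Real.sin θ^2) := by
  have hb : 0 < b := ha.trans hab
  have hp : 0 < b - a := by linarith
  have hq : 0 < b + a := by linarith
  have h1 := intervalIntegral.integral_comp_mul_left (a := 0) (b := π) (c := 2)
    (fun η => 1 / Real.sqrt (a^2 + b^2 - 2*a*b*Real.cos η)) (by norm_num : (2:ℝ) ≠ 0)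
  rw [mul_zero] at h1
  have h2 : ∀ x : ℝ, a^2+b^2-2*a*b*Real.cos (2*x)
      = (b-a)^2*Real.cos x^2+(b+a)^2*Real.sin x^2 := by
    intro x
    rw [Real.cos_two_mul]
    linear_combination (-(b+a)^2) * (Real.sin_sq_add_cos_sq x)
  simp only [h2] at h1
  have hcont := form_cont hp hq
  have h3 := intervalIntegral.integral_add_adjacent_intervals
    (a := (0:ℝ)) (b := π/2) (c := π)
    (hcont.intervalIntegrable (μ := volume) _ _) (hcont.intervalIntegrable (μ := volume) _ _)
  have h5 := intervalIntegral.integral_comp_sub_left (a := (0:ℝ)) (b := π/2)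
    (fun x => 1 / Real.sqrt ((b-a)^2*Real.cos x^2+(b+a)^2*Real.sin x^2)) π
  have h6 : ∀ x : ℝ, (1:ℝ) / Real.sqrt ((b-a)^2*Real.cos (π - x)^2+(b+a)^2*Real.sin (π - x)^2)
      = 1 / Real.sqrt ((b-a)^2*Real.cos x^2+(b+a)^2*Real.sin x^2) := by
    intro x
    rw [Real.cos_pi_sub, Real.sin_pi_sub, neg_sq]
  simp only [h6] at h5
  rw [show π - π/2 = π/2 by ring, sub_zero] at h5
  -- h5 : ∫ x in 0..π/2, g = ∫ x in π/2..π, g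
  -- h3 : ∫ 0..π/2 + ∫ π/2..π = ∫ 0..π
  -- h1 : ∫ x in 0..π, g = 2⁻¹ • ∫ 0..2π f
  rw [← h3, ← h5] at h1
  rw [smul_eq_mul] at h1
  linarith [h1]

lemma inv_not_integrableOn {c : ℝ} (hc : 0 < c) :
    ¬ MeasureTheory.IntegrableOn (fun x : ℝ => x⁻¹) (Ioo 0 c) := by
  intro H
  have H2 : MeasureTheory.IntegrableOn (fun x : ℝ => x ^ (-1 : ℝ)) (Ioo 0 c) := by
    apply H.congr_fun _ measurableSet_Ioo
    intro x hx
    simp [Real.rpow_neg_one]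
  have := (integrableOn_Ioo_rpow_iff hc).1 H2
  linarith

lemma inv_not_intervalIntegrable {c : ℝ} (hc : 0 < c) :
    ¬ IntervalIntegrable (fun x : ℝ => x⁻¹) volume 0 c := by
  rw [intervalIntegrable_iff_integrableOn_Ioo_of_le hc.le]
  exact inv_not_integrableOn hc

lemma lhs_ab {a : ℝ} (ha : 0 < a) :
    ¬ IntervalIntegrable (fun η => 1 / Real.sqrt (a^2 + a^2 - 2*a*a*Real.cos η)) volume 0 (2*π) := by
  intro H
  have hππ : (1:ℝ) ≤ 2*π := by nlinarith [Real.pi_gt_three]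
  have H1 := H.mono_set (c := 0) (d := 1) (by
    rw [uIcc_of_le (by norm_num), uIcc_of_le (by linarith)]
    exact Icc_subset_Icc le_rfl hππ)
  have H2 : IntervalIntegrable (fun η => (a*η)⁻¹) volume 0 1 := by
    apply H1.mono_fun ((measurable_id.const_mul a).inv.aestronglyMeasurable)
    rw [Filter.EventuallyLE, ae_restrict_iff' measurableSet_uIoc]
    filter_upwards with η hη
    rw [uIoc_of_le (by norm_num : (0:ℝ) ≤ 1)] at hη
    obtain ⟨hη0, hη1⟩ := hη
    have hcos : Real.cos η < 1 := by
      refine lt_of_le_of_ne (Real.cos_le_one η) (fun h => ?_)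
      have := (Real.cos_eq_one_iff_of_lt_of_lt
        (by nlinarith [Real.pi_gt_three]) (by nlinarith [Real.pi_gt_three])).1 h
      linarith
    have hX : 0 < a^2 + a^2 - 2*a*a*Real.cos η := by
      nlinarith [mul_pos (mul_pos ha ha) (sub_pos.2 hcos)]
    have hXle : a^2 + a^2 - 2*a*a*Real.cos η ≤ (a*η)^2 := by
      nlinarith [Real.one_sub_sq_div_two_le_cos (x := η)]
    have hsle : Real.sqrt (a^2 + a^2 - 2*a*a*Real.cos η) ≤ a*η := by
      rw [show a*η = Real.sqrt ((a*η)^2) by rw [Real.sqrt_sq (by positivity)]]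
      exact Real.sqrt_le_sqrt hXle
    have hspos : 0 < Real.sqrt (a^2 + a^2 - 2*a*a*Real.cos η) := Real.sqrt_pos.2 hX
    calc ‖(a*η)⁻¹‖ = (a*η)⁻¹ := by
            rw [Real.norm_eq_abs, abs_of_pos (by positivity : (0:ℝ) < (a*η)⁻¹)]
      _ ≤ 1 / Real.sqrt (a^2 + a^2 - 2*a*a*Real.cos η) := by
            rw [← one_div]
            exact one_div_le_one_div_of_le hspos hsle
      _ = ‖1 / Real.sqrt (a^2 + a^2 - 2*a*a*Real.cos η)‖ := by
            rw [Real.norm_eq_abs, abs_of_nonneg (by positivity)]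
  have H3 : IntervalIntegrable (fun η : ℝ => η⁻¹) volume 0 1 := by
    have H4 := H2.const_mul a
    have : (fun η : ℝ => a * (a*η)⁻¹) = (fun η : ℝ => η⁻¹) := by
      funext η
      rw [mul_inv, ← mul_assoc, mul_inv_cancel₀ ha.ne', one_mul]
    rwa [this] at H4
  exact inv_not_intervalIntegrable one_pos H3

lemma rhs_ab {a : ℝ} (ha : 0 < a) :
    ¬ IntervalIntegrable (fun t => 1 / (Real.sqrt (a^2 - t^2) * Real.sqrt (a^2 - t^2))) volume 0 a := by
  intro H
  have H1 := H.mono_set (c := a/2) (d := a) (by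
    rw [uIcc_of_le (by linarith), uIcc_of_le (by linarith)]
    exact Icc_subset_Icc (by linarith) le_rfl)
  have H2 : IntervalIntegrable (fun t => (2*a*(a-t))⁻¹) volume (a/2) a := by
    apply H1.mono_fun (((measurable_const.sub measurable_id).const_mul (2*a)).inv.aestronglyMeasurable)
    rw [Filter.EventuallyLE, ae_restrict_iff' measurableSet_uIoc]
    filter_upwards with t ht
    rw [uIoc_of_le (by linarith : a/2 ≤ a)] at ht
    obtain ⟨ht0, ht1⟩ := ht
    have htpos : 0 < t := by linarith
    rcases eq_or_lt_of_le ht1 with rfl | hlt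
    · simp
    · have hX : 0 < a^2 - t^2 := by nlinarith
      have hle : a^2 - t^2 ≤ 2*a*(a-t) := by nlinarith
      have h2a : (0:ℝ) < 2*a*(a-t) := by nlinarith
      calc ‖(2*a*(a-t))⁻¹‖ = (2*a*(a-t))⁻¹ := by
              rw [Real.norm_eq_abs, abs_of_pos (by positivity : (0:ℝ) < (2*a*(a-t))⁻¹)]
        _ ≤ 1 / (a^2 - t^2) := by
              rw [← one_div]
              exact one_div_le_one_div_of_le hX hle
        _ = 1 / (Real.sqrt (a^2 - t^2) * Real.sqrt (a^2 - t^2)) := by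
              rw [Real.mul_self_sqrt hX.le]
        _ = ‖1 / (Real.sqrt (a^2 - t^2) * Real.sqrt (a^2 - t^2))‖ := by
              rw [Real.norm_eq_abs, abs_of_nonneg (by positivity)]
  have H3 : IntervalIntegrable (fun t : ℝ => (a-t)⁻¹) volume (a/2) a := by
    have H4 := H2.const_mul (2*a)
    have : (fun t : ℝ => (2*a) * (2*a*(a-t))⁻¹) = (fun t : ℝ => (a-t)⁻¹) := by
      funext t
      rw [mul_inv, ← mul_assoc, mul_inv_cancel₀ (by positivity : (2*a) ≠ 0), one_mul]
    rwa [this] at H4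
  have H5 := H3.comp_sub_left a
  simp only [sub_sub_cancel, sub_self] at H5
  rw [show a - a/2 = a/2 by ring] at H5
  exact inv_not_intervalIntegrable (by linarith) H5.symm

lemma main_lt {a b : ℝ} (ha : 0 < a) (hab : a < b) :
    (∫ η in (0:ℝ)..(2*π), 1 / Real.sqrt (a^2 + b^2 - 2*a*b*Real.cos η))
      = 4 * ∫ t in (0:ℝ)..a, 1 / (Real.sqrt (a^2 - t^2) * Real.sqrt (b^2 - t^2)) := by
  have hp : 0 < b - a := by linarith
  have hq : 0 < b + a := by linarith
  rw [lhs_red ha hab, landen hp hq]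
  have e : ∀ θ:ℝ, (((b-a)+(b+a))/2)^2*Real.cos θ^2 + ((b-a)*(b+a))*Real.sin θ^2
      = b^2*Real.cos θ^2+(b^2-a^2)*Real.sin θ^2 := fun θ => by ring
  simp only [e]
  rw [← rhs_sub ha hab]

theorem copson_lemma (a b : ℝ) (ha : 0 < a) (hb : 0 < b) :
    ∫ η in (0:ℝ)..(2 * π), 1 / Real.sqrt (a ^ 2 + b ^ 2 - 2 * a * b * Real.cos η)
      = 4 * ∫ t in (0:ℝ)..(min a b),
          1 / (Real.sqrt (a ^ 2 - t ^ 2) * Real.sqrt (b ^ 2 - t ^ 2)) := by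
  rcases lt_trichotomy a b with hab | rfl | hba
  · rw [min_eq_left hab.le]
    exact main_lt ha hab
  · rw [min_self]
    rw [intervalIntegral.integral_undef (lhs_ab ha),
      intervalIntegral.integral_undef (rhs_ab ha)]
    norm_num
  · rw [min_eq_right hba.le]
    have h1 : ∀ η:ℝ, a^2+b^2-2*a*b*Real.cos η = b^2+a^2-2*b*a*Real.cos η := fun η => by ring
    simp only [h1]
    rw [main_lt hb hba]
    have h2 : ∀ t:ℝ, Real.sqrt (b^2-t^2) * Real.sqrt (a^2-t^2)
        = Real.sqrt (a^2-t^2) * Real.sqrt (b^2-t^2) := fun t => mul_comm _ _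
    simp only [h2]
end

section
/- For 0 < α < π, the integral over φ from 0 to α of arctan(√((1 + cos α)/(cos φ − cos α))) · sin φ dφ equals π(1 − cos α)/2 + sin α − α. -/
open Real MeasureTheory

theorem integral_arctan_sqrt_ratio (α : ℝ) (hα₀ : 0 < α) (hα₁ : α < π) :
    ∫ φ in (0:ℝ)..α,
      Real.arctan (Real.sqrt ((1 + Real.cos α) / (Real.cos φ - Real.cos α))) * Real.sin φ
      = π * (1 - Real.cos α) / 2 + Real.sin α - α := by
  set c := Real.cos α with hc
  have hc1 : -1 < c := by
    have := Real.cos_lt_cos_of_nonneg_of_le_pi hα₀.le le_rfl hα₁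
    simpa [Real.cos_pi] using this
  have h1c : (0:ℝ) < 1 + c := by linarith
  -- the substituted function s and the antiderivative H
  set s : ℝ → ℝ := fun x => Real.sqrt ((Real.cos x - c) / (1 + c)) with hs
  set H : ℝ → ℝ := fun x =>
    -(π/2) * Real.cos x + (1 + Real.cos x) * Real.arctan (s x) - (1 + c) * s x with hH
  set G : ℝ → ℝ := fun x => (π/2 - Real.arctan (s x)) * Real.sin x with hG
  -- continuity
  have hscont : Continuous s := by
    apply Real.continuous_sqrt.comp
    exact (Real.continuous_cos.sub continuous_const).div_const _
  have hHcont : Continuous H := by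
    apply Continuous.sub
    · exact ((continuous_const.mul Real.continuous_cos).add
        ((continuous_const.add Real.continuous_cos).mul
          (Real.continuous_arctan.comp hscont)))
    · exact continuous_const.mul hscont
  have hGcont : Continuous G := by
    exact ((continuous_const.sub (Real.continuous_arctan.comp hscont)).mul Real.continuous_sin)
  -- derivative of H on Ioo 0 α
  have hderiv : ∀ x ∈ Set.Ioo (0:ℝ) α, HasDerivAt H (G x) x := by
    intro x hx
    have hcx : c < Real.cos x :=
      Real.cos_lt_cos_of_nonneg_of_le_pi hx.1.le hα₁.le hx.2
    have hu : 0 < (Real.cos x - c) / (1 + c) := div_pos (by linarith) h1c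
    have hsx : 0 < s x := Real.sqrt_pos.mpr hu
    have hsq : s x ^ 2 = (Real.cos x - c) / (1 + c) := Real.sq_sqrt hu.le
    have hinner : HasDerivAt (fun y => (Real.cos y - c) / (1 + c))
        (-Real.sin x / (1 + c)) x := by
      have := ((Real.hasDerivAt_cos x).sub_const c).div_const (1 + c)
      simpa using this
    have hsd : HasDerivAt s (1 / (2 * s x) * (-Real.sin x / (1 + c))) x := by
      have := (Real.hasDerivAt_sqrt hu.ne').comp x hinner
      simpa [hs, Function.comp_def] using this
    have harc : HasDerivAt (fun y => Real.arctan (s y))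
        (1 / (1 + s x ^ 2) * (1 / (2 * s x) * (-Real.sin x / (1 + c)))) x :=
      (Real.hasDerivAt_arctan (s x)).comp x hsd
    have hterm1 : HasDerivAt (fun y => -(π/2) * Real.cos y) (-(π/2) * (-Real.sin x)) x :=
      (Real.hasDerivAt_cos x).const_mul _
    have hterm2 : HasDerivAt (fun y => (1 + Real.cos y) * Real.arctan (s y))
        ((-Real.sin x) * Real.arctan (s x) +
          (1 + Real.cos x) * (1 / (1 + s x ^ 2) * (1 / (2 * s x) * (-Real.sin x / (1 + c))))) x := by
      have h0 : HasDerivAt (fun y => 1 + Real.cos y) (-Real.sin x) x := by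
        simpa using (Real.hasDerivAt_cos x).const_add 1
      exact h0.mul harc
    have hterm3 : HasDerivAt (fun y => (1 + c) * s y)
        ((1 + c) * (1 / (2 * s x) * (-Real.sin x / (1 + c)))) x := hsd.const_mul _
    have hHd := (hterm1.add hterm2).sub hterm3
    have key : -(π/2) * (-Real.sin x) +
        ((-Real.sin x) * Real.arctan (s x) +
          (1 + Real.cos x) * (1 / (1 + s x ^ 2) * (1 / (2 * s x) * (-Real.sin x / (1 + c))))) -
        (1 + c) * (1 / (2 * s x) * (-Real.sin x / (1 + c))) = G x := by
      have h1s : 1 + s x ^ 2 = (1 + Real.cos x) / (1 + c) := by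
        rw [hsq]; field_simp; ring
      rw [hG, h1s]
      have hx1 : (0:ℝ) < 1 + Real.cos x := by linarith
      field_simp
      ring
    rw [hH]
    exact key ▸ hHd
  -- integrand equals G a.e. on the interval
  have hcongr : ∫ φ in (0:ℝ)..α,
      Real.arctan (Real.sqrt ((1 + c) / (Real.cos φ - c))) * Real.sin φ
      = ∫ φ in (0:ℝ)..α, G φ := by
    apply intervalIntegral.integral_congr_ae
    have hne : ∀ᵐ x ∂(volume : Measure ℝ), x ≠ α := by
      rw [MeasureTheory.ae_iff]
      simp [measure_singleton]
    filter_upwards [hne] with x hxne hx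
    rw [Set.uIoc_of_le hα₀.le] at hx
    have hxα : x < α := lt_of_le_of_ne hx.2 hxne
    have hcx : c < Real.cos x :=
      Real.cos_lt_cos_of_nonneg_of_le_pi hx.1.le hα₁.le hxα
    have hu : 0 < (Real.cos x - c) / (1 + c) := div_pos (by linarith) h1c
    have hsx : 0 < s x := Real.sqrt_pos.mpr hu
    have : (1 + c) / (Real.cos x - c) = ((Real.cos x - c) / (1 + c))⁻¹ := by
      rw [inv_div]
    rw [hG, this, Real.sqrt_inv, Real.arctan_inv_of_pos hsx]
  rw [hcongr]
  rw [intervalIntegral.integral_eq_sub_of_hasDerivAt_of_le hα₀.le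
    hHcont.continuousOn hderiv (hGcont.intervalIntegrable 0 α)]
  -- evaluate endpoints
  have hsα : s α = 0 := by
    rw [hs]; simp [hc]
  have hs0 : s 0 = Real.tan (α / 2) := by
    have hcos2 : Real.cos (α/2) ^ 2 = (1 + c) / 2 := by
      have := Real.cos_sq (α/2)
      rw [this]; rw [show 2 * (α/2) = α by ring]; ring
    have hsin2 : Real.sin (α/2) ^ 2 = (1 - c) / 2 := by
      have := Real.sin_sq_eq_half_sub (α/2)
      rw [this]; rw [show 2 * (α/2) = α by ring]; ring
    have hcospos : 0 < Real.cos (α/2) := Real.cos_pos_of_mem_Ioo ⟨by linarith, by linarith⟩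
    have hsinpos : 0 < Real.sin (α/2) := Real.sin_pos_of_pos_of_lt_pi (by linarith) (by linarith)
    show Real.sqrt ((Real.cos 0 - c) / (1 + c)) = Real.tan (α/2)
    have : (Real.cos 0 - c) / (1 + c) = Real.tan (α/2) ^ 2 := by
      rw [Real.tan_eq_sin_div_cos, div_pow, hcos2, hsin2, Real.cos_zero]
      field_simp
    have htannn : 0 ≤ Real.tan (α/2) := by
      rw [Real.tan_eq_sin_div_cos]; positivity
    rw [this, Real.sqrt_sq htannn]
  have harctan0 : Real.arctan (Real.tan (α/2)) = α/2 :=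
    Real.arctan_tan (by linarith [Real.pi_pos]) (by linarith)
  have htansin : (1 + c) * Real.tan (α/2) = Real.sin α := by
    have hcospos : 0 < Real.cos (α/2) := Real.cos_pos_of_mem_Ioo ⟨by linarith, by linarith⟩
    have hcos2 : Real.cos (α/2) ^ 2 = (1 + c) / 2 := by
      have := Real.cos_sq (α/2)
      rw [this]; rw [show 2 * (α/2) = α by ring]; ring
    have hsinα : Real.sin α = 2 * Real.sin (α/2) * Real.cos (α/2) := by
      rw [show α = 2 * (α/2) by ring, Real.sin_two_mul]; ring_nf
    rw [Real.tan_eq_sin_div_cos, hsinα]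
    field_simp
    linear_combination (-2) * Real.sin (α/2) * hcos2
  rw [hH]
  simp only [hsα, hs0, Real.cos_zero, Real.arctan_zero, harctan0]
  rw [htansin]
  ring
end

section
/- For 0 < α < π, the integral over φ from 0 to α of (1 + (2/π)[√((1 + cos α)/(cos φ − cos α)) − arctan(√((1 + cos α)/(cos φ − cos α)))]) · sin φ dφ equals (2/π)(sin α + α). -/
open Real Set MeasureTheory intervalIntegral

noncomputable def Gaux (α φ : ℝ) : ℝ :=
  -Real.cos φ + (2 / π) *
    ((Real.cos φ - Real.cos α) *
        Real.arctan (Real.sqrt ((1 + Real.cos α) / (Real.cos φ - Real.cos α)))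
      - Real.sqrt (1 + Real.cos α) * Real.sqrt (Real.cos φ - Real.cos α)
      - (1 + Real.cos α) *
        Real.arctan (Real.sqrt ((Real.cos φ - Real.cos α) / (1 + Real.cos α))))

lemma arctan_le_self' {x : ℝ} (hx : 0 ≤ x) : Real.arctan x ≤ x := by
  have h1 : 0 ≤ Real.arctan x := by
    simpa using Real.arctan_strictMono.monotone hx
  have := Real.le_tan h1 (Real.arctan_lt_pi_div_two x)
  rwa [Real.tan_arctan] at this

lemma arctan_nonneg' {x : ℝ} (hx : 0 ≤ x) : 0 ≤ Real.arctan x := by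
  simpa using Real.arctan_strictMono.monotone hx

-- derivative of Gaux
lemma Gaux_deriv (α : ℝ) (hα₀ : 0 < α) (hα₁ : α < π) {φ : ℝ} (hφ : φ ∈ Ioo 0 α) :
    HasDerivAt (Gaux α)
      ((1 + (2 / π) * (Real.sqrt ((1 + Real.cos α) / (Real.cos φ - Real.cos α))
        - Real.arctan (Real.sqrt ((1 + Real.cos α) / (Real.cos φ - Real.cos α)))))
        * Real.sin φ) φ := by
  have hπ : (0:ℝ) < π := Real.pi_pos
  set c := Real.cos α with hc
  set a := 1 + c with hadef
  set t := Real.cos φ - c with htdef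
  have hca : -1 < c := by
    have := Real.cos_lt_cos_of_nonneg_of_le_pi (le_of_lt hα₀) le_rfl hα₁
    simpa [Real.cos_pi] using this
  have ha : 0 < a := by simp only [hadef]; linarith
  have ht : 0 < t := by
    have := Real.cos_lt_cos_of_nonneg_of_le_pi (le_of_lt hφ.1) (le_of_lt hα₁) hφ.2
    simp only [htdef]; linarith
  set s := Real.sqrt t with hsdef
  set r := Real.sqrt a with hrdef
  have hs : 0 < s := Real.sqrt_pos.2 ht
  have hr : 0 < r := Real.sqrt_pos.2 ha
  have hs2 : s ^ 2 = t := Real.sq_sqrt ht.le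
  have hr2 : r ^ 2 = a := Real.sq_sqrt ha.le
  -- basic derivatives
  have hcos : HasDerivAt (fun x => Real.cos x - c) (-Real.sin φ) φ :=
    (Real.hasDerivAt_cos φ).sub_const c
  have hat : HasDerivAt (fun x => a / (Real.cos x - c))
      ((0 * t - a * (-Real.sin φ)) / t ^ 2) φ :=
    (hasDerivAt_const φ a).div hcos ht.ne'
  have hsq1 : HasDerivAt (fun x => Real.sqrt (a / (Real.cos x - c)))
      (1 / (2 * Real.sqrt (a / t)) * ((0 * t - a * (-Real.sin φ)) / t ^ 2)) φ := by
    have := (Real.hasDerivAt_sqrt (x := a / t) (by positivity)).comp φ hat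
    simpa [Function.comp_def] using this
  have harc1 : HasDerivAt (fun x => Real.arctan (Real.sqrt (a / (Real.cos x - c))))
      (1 / (1 + Real.sqrt (a / t) ^ 2) *
        (1 / (2 * Real.sqrt (a / t)) * ((0 * t - a * (-Real.sin φ)) / t ^ 2))) φ := by
    have := (Real.hasDerivAt_arctan (Real.sqrt (a / t))).comp φ hsq1
    simpa [Function.comp_def] using this
  have hta : HasDerivAt (fun x => (Real.cos x - c) / a) (-Real.sin φ / a) φ :=
    hcos.div_const a
  have hsq2 : HasDerivAt (fun x => Real.sqrt ((Real.cos x - c) / a))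
      (1 / (2 * Real.sqrt (t / a)) * (-Real.sin φ / a)) φ := by
    have := (Real.hasDerivAt_sqrt (x := t / a) (by positivity)).comp φ hta
    simpa [Function.comp_def] using this
  have harc2 : HasDerivAt (fun x => Real.arctan (Real.sqrt ((Real.cos x - c) / a)))
      (1 / (1 + Real.sqrt (t / a) ^ 2) *
        (1 / (2 * Real.sqrt (t / a)) * (-Real.sin φ / a))) φ := by
    have := (Real.hasDerivAt_arctan (Real.sqrt (t / a))).comp φ hsq2
    simpa [Function.comp_def] using this
  have hsqt : HasDerivAt (fun x => Real.sqrt (Real.cos x - c))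
      (1 / (2 * Real.sqrt t) * (-Real.sin φ)) φ := by
    have := (Real.hasDerivAt_sqrt (x := t) ht.ne').comp φ hcos
    simpa [Function.comp_def] using this
  have hprod : HasDerivAt
      (fun x => (Real.cos x - c) * Real.arctan (Real.sqrt (a / (Real.cos x - c))))
      ((-Real.sin φ) * Real.arctan (Real.sqrt (a / t)) +
        t * (1 / (1 + Real.sqrt (a / t) ^ 2) *
          (1 / (2 * Real.sqrt (a / t)) * ((0 * t - a * (-Real.sin φ)) / t ^ 2)))) φ := by
    exact hcos.mul harc1
  have hG : HasDerivAt (Gaux α)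
      (-(-Real.sin φ) + (2 / π) *
        (((-Real.sin φ) * Real.arctan (Real.sqrt (a / t)) +
          t * (1 / (1 + Real.sqrt (a / t) ^ 2) *
            (1 / (2 * Real.sqrt (a / t)) * ((0 * t - a * (-Real.sin φ)) / t ^ 2))))
         - r * (1 / (2 * Real.sqrt t) * (-Real.sin φ))
         - a * (1 / (1 + Real.sqrt (t / a) ^ 2) *
            (1 / (2 * Real.sqrt (t / a)) * (-Real.sin φ / a))))) φ := by
    unfold Gaux
    exact ((Real.hasDerivAt_cos φ).neg).add
      ((((hprod.sub (hsqt.const_mul r)).sub (harc2.const_mul a))).const_mul (2 / π))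
  convert hG using 1
  have hdiv1 : Real.sqrt (a / t) = r / s := Real.sqrt_div ha.le t
  have hdiv2 : Real.sqrt (t / a) = s / r := Real.sqrt_div ht.le a
  rw [hdiv1, hdiv2, ← hsdef, ← hs2, ← hr2]
  have h1 : (1 + (r / s) ^ 2) ≠ 0 := by positivity
  have h2 : (1 + (s / r) ^ 2) ≠ 0 := by positivity
  field_simp
  ring

-- continuity of t ↦ t * arctan (√(a/t)) on [0, ∞)
lemma cont_mul_arctan (a : ℝ) :
    ContinuousOn (fun t : ℝ => t * Real.arctan (Real.sqrt (a / t))) (Ici 0) := by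
  intro t ht
  rcases (mem_Ici.1 ht).eq_or_lt with rfl | h0
  · have key : Filter.Tendsto (fun x : ℝ => x * Real.arctan (Real.sqrt (a / x)))
        (nhdsWithin 0 (Ici 0)) (nhds 0) := by
      refine squeeze_zero' (g := fun x : ℝ => x * (π / 2)) ?_ ?_ ?_
      · filter_upwards [self_mem_nhdsWithin] with x hx
        exact mul_nonneg (mem_Ici.1 hx) (arctan_nonneg' (Real.sqrt_nonneg _))
      · filter_upwards [self_mem_nhdsWithin] with x hx
        exact mul_le_mul_of_nonneg_left (Real.arctan_lt_pi_div_two _).le (mem_Ici.1 hx)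
      · have : Filter.Tendsto (fun x : ℝ => x * (π / 2)) (nhds 0) (nhds (0 * (π / 2))) :=
          (continuous_id.mul continuous_const).tendsto 0
        simpa using this.mono_left nhdsWithin_le_nhds
    have h00 : (fun t : ℝ => t * Real.arctan (Real.sqrt (a / t))) 0 = 0 := by simp
    unfold ContinuousWithinAt
    rw [h00]
    exact key
  · have hct : ContinuousAt (fun x : ℝ => a / x) t :=
      continuousAt_const.div continuousAt_id h0.ne'
    exact (continuousAt_id.mul
      ((Real.continuous_arctan.comp Real.continuous_sqrt).continuousAt.comp hct)).continuousWithinAt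

lemma Gaux_cont (α : ℝ) (hα₀ : 0 < α) (hα₁ : α < π) :
    ContinuousOn (Gaux α) (Icc 0 α) := by
  have hca : -1 < Real.cos α := by
    have := Real.cos_lt_cos_of_nonneg_of_le_pi (le_of_lt hα₀) le_rfl hα₁
    simpa [Real.cos_pi] using this
  have ha : (0:ℝ) < 1 + Real.cos α := by linarith
  have hc : Continuous fun φ : ℝ => Real.cos φ - Real.cos α :=
    Real.continuous_cos.sub continuous_const
  have hmaps : MapsTo (fun φ : ℝ => Real.cos φ - Real.cos α) (Icc 0 α) (Ici 0) := by
    intro φ hφ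
    have := Real.cos_le_cos_of_nonneg_of_le_pi hφ.1 hα₁.le hφ.2
    simpa using this
  unfold Gaux
  apply ContinuousOn.add (Real.continuous_cos.neg.continuousOn)
  apply ContinuousOn.mul continuousOn_const
  apply ContinuousOn.sub
  apply ContinuousOn.sub
  · exact (cont_mul_arctan (1 + Real.cos α)).comp hc.continuousOn hmaps
  · exact (continuous_const.mul (Real.continuous_sqrt.comp hc)).continuousOn
  · exact (continuous_const.mul
      (Real.continuous_arctan.comp (Real.continuous_sqrt.comp (hc.div_const _)))).continuousOn

lemma Gaux_right (α : ℝ) : Gaux α α = -Real.cos α := by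
  unfold Gaux
  simp

lemma Gaux_left (α : ℝ) (hα₀ : 0 < α) (hα₁ : α < π) :
    Gaux α 0 = -Real.cos α - (2 / π) * (Real.sin α + α) := by
  have hπ : (0:ℝ) < π := Real.pi_pos
  set c := Real.cos α with hc
  have hca : -1 < c := by
    have := Real.cos_lt_cos_of_nonneg_of_le_pi (le_of_lt hα₀) le_rfl hα₁
    simpa [Real.cos_pi] using this
  have hc1 : c < 1 := by
    have := Real.cos_lt_cos_of_nonneg_of_le_pi le_rfl hα₁.le hα₀
    simpa [Real.cos_zero] using this
  have ha : (0:ℝ) < 1 + c := by linarith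
  have ht : (0:ℝ) < 1 - c := by linarith
  have hhalf : Real.cos (α / 2) > 0 :=
    Real.cos_pos_of_mem_Ioo ⟨by linarith, by linarith⟩
  have htan : 0 < Real.tan (α / 2) :=
    Real.tan_pos_of_pos_of_lt_pi_div_two (by linarith) (by linarith)
  have hcos2 : Real.cos (α / 2) ^ 2 = (1 + c) / 2 := by
    rw [Real.cos_sq]
    rw [show 2 * (α / 2) = α by ring]
    ring
  have hsin2 : Real.sin (α / 2) ^ 2 = (1 - c) / 2 := by
    rw [Real.sin_sq]
    rw [hcos2]
    ring
  have htansq : Real.tan (α / 2) ^ 2 = (1 - c) / (1 + c) := by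
    rw [Real.tan_eq_sin_div_cos, div_pow, hsin2, hcos2]
    field_simp
  have hsq1 : Real.sqrt ((1 - c) / (1 + c)) = Real.tan (α / 2) := by
    rw [← htansq, Real.sqrt_sq htan.le]
  have harc1 : Real.arctan (Real.sqrt ((1 - c) / (1 + c))) = α / 2 := by
    rw [hsq1, Real.arctan_tan (by linarith) (by linarith)]
  have hsq2 : Real.sqrt ((1 + c) / (1 - c)) = (Real.tan (α / 2))⁻¹ := by
    rw [show (1 + c) / (1 - c) = ((1 - c) / (1 + c))⁻¹ by rw [inv_div], Real.sqrt_inv, hsq1]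
  have harc2 : Real.arctan (Real.sqrt ((1 + c) / (1 - c))) = π / 2 - α / 2 := by
    rw [hsq2, Real.arctan_inv_of_pos htan, Real.arctan_tan (by linarith) (by linarith)]
  have hprod : Real.sqrt (1 + c) * Real.sqrt (1 - c) = Real.sin α := by
    rw [← Real.sqrt_mul ha.le]
    have h1 : (1 + c) * (1 - c) = Real.sin α ^ 2 := by
      have := Real.sin_sq_add_cos_sq α
      nlinarith [this]
    rw [h1, Real.sqrt_sq (Real.sin_nonneg_of_nonneg_of_le_pi hα₀.le hα₁.le)]
  unfold Gaux
  rw [Real.cos_zero, ← hc, harc2, harc1, hprod]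
  field_simp
  ring

lemma sin_ge_min {x : ℝ} (h0 : 0 ≤ x) (h1 : x ≤ π) :
    2 / π * min x (π - x) ≤ Real.sin x := by
  have hπ : (0:ℝ) < π := Real.pi_pos
  rcases le_total x (π / 2) with h | h
  · calc 2 / π * min x (π - x) ≤ 2 / π * x := by
          apply mul_le_mul_of_nonneg_left (min_le_left _ _) (by positivity)
    _ ≤ Real.sin x := Real.mul_le_sin h0 h
  · rw [← Real.sin_pi_sub]
    calc 2 / π * min x (π - x) ≤ 2 / π * (π - x) := by
          apply mul_le_mul_of_nonneg_left (min_le_right _ _) (by positivity)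
    _ ≤ Real.sin (π - x) := Real.mul_le_sin (by linarith) (by linarith)

lemma cos_lower_bound (α : ℝ) (hα₀ : 0 < α) (hα₁ : α < π) {φ : ℝ} (hφ : φ ∈ Icc 0 α) :
    4 / π ^ 2 * min (α / 2) (π - α) * (α - φ) ≤ Real.cos φ - Real.cos α := by
  have hπ : (0:ℝ) < π := Real.pi_pos
  obtain ⟨hφ0, hφα⟩ := hφ
  have key : Real.cos φ - Real.cos α =
      2 * Real.sin ((φ + α) / 2) * Real.sin ((α - φ) / 2) := by
    rw [Real.cos_sub_cos]
    rw [show (φ - α) / 2 = -((α - φ) / 2) by ring, Real.sin_neg]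
    ring
  rw [key]
  have hmem : 0 ≤ (φ + α) / 2 ∧ (φ + α) / 2 ≤ π := ⟨by linarith, by linarith⟩
  have hminle : min (α / 2) (π - α) ≤ min ((φ + α) / 2) (π - (φ + α) / 2) := by
    apply le_min
    · exact le_trans (min_le_left _ _) (by linarith)
    · exact le_trans (min_le_right _ _) (by linarith)
  have h1 : 2 / π * min (α / 2) (π - α) ≤ Real.sin ((φ + α) / 2) :=
    le_trans (mul_le_mul_of_nonneg_left hminle (by positivity)) (sin_ge_min hmem.1 hmem.2)
  have h2 : 2 / π * ((α - φ) / 2) ≤ Real.sin ((α - φ) / 2) :=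
    Real.mul_le_sin (by linarith) (by linarith)
  have hb1' : (0:ℝ) ≤ 2 / π * min (α / 2) (π - α) := by
    have : (0:ℝ) ≤ min (α / 2) (π - α) := le_min (by linarith) (by linarith)
    positivity
  have hb2 : (0:ℝ) ≤ 2 / π * ((α - φ) / 2) := by
    have : (0:ℝ) ≤ α - φ := by linarith
    positivity
  have hsin1' : 0 ≤ Real.sin ((φ + α) / 2) := le_trans hb1' h1
  have hprod := mul_le_mul h1 h2 hb2 hsin1'
  have heq : 4 / π ^ 2 * min (α / 2) (π - α) * (α - φ)
      = 2 * (2 / π * min (α / 2) (π - α) * (2 / π * ((α - φ) / 2))) := by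
    field_simp
    ring
  rw [heq]
  linarith [hprod]

lemma integrand_integrable (α : ℝ) (hα₀ : 0 < α) (hα₁ : α < π) :
    IntervalIntegrable (fun φ =>
      (1 + (2 / π) * (Real.sqrt ((1 + Real.cos α) / (Real.cos φ - Real.cos α))
        - Real.arctan (Real.sqrt ((1 + Real.cos α) / (Real.cos φ - Real.cos α)))))
        * Real.sin φ) MeasureTheory.volume 0 α := by
  have hπ : (0:ℝ) < π := Real.pi_pos
  set c := Real.cos α with hc
  have hca : -1 < c := by
    have := Real.cos_lt_cos_of_nonneg_of_le_pi (le_of_lt hα₀) le_rfl hα₁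
    simpa [Real.cos_pi] using this
  have ha : (0:ℝ) < 1 + c := by linarith
  set K := 4 / π ^ 2 * min (α / 2) (π - α) with hK
  have hKpos : 0 < K := by
    have : (0:ℝ) < min (α / 2) (π - α) := lt_min (by linarith) (by linarith)
    positivity
  set C := (2 / π) * Real.sqrt ((1 + c) / K) with hCdef
  have hCpos : 0 ≤ C := by positivity
  -- dominating function
  have hD : IntervalIntegrable (fun φ => 2 + C * (α - φ) ^ (-(1/2) : ℝ))
      MeasureTheory.volume 0 α := by
    have h1 : IntervalIntegrable (fun x : ℝ => x ^ (-(1/2) : ℝ))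
        MeasureTheory.volume α 0 := intervalIntegral.intervalIntegrable_rpow' (by norm_num)
    have h2 := h1.comp_sub_left α
    simp only [sub_self, sub_zero] at h2
    exact intervalIntegrable_const.add (h2.const_mul C)
  rw [intervalIntegrable_iff_integrableOn_Ioo_of_le hα₀.le] at hD ⊢
  have htpos : ∀ φ ∈ Ioo (0:ℝ) α, 0 < Real.cos φ - c := by
    intro φ hφ
    have := Real.cos_lt_cos_of_nonneg_of_le_pi hφ.1.le hα₁.le hφ.2
    simpa using sub_pos.2 this
  -- measurability
  have hcont : ContinuousOn (fun φ =>
      (1 + (2 / π) * (Real.sqrt ((1 + c) / (Real.cos φ - c))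
        - Real.arctan (Real.sqrt ((1 + c) / (Real.cos φ - c)))))
        * Real.sin φ) (Ioo 0 α) := by
    have hb : ContinuousOn (fun φ : ℝ => (1 + c) / (Real.cos φ - c)) (Ioo 0 α) :=
      continuousOn_const.div
        (Real.continuous_cos.sub continuous_const).continuousOn
        (fun φ hφ => (htpos φ hφ).ne')
    apply ContinuousOn.mul _ Real.continuous_sin.continuousOn
    apply ContinuousOn.add continuousOn_const
    apply ContinuousOn.mul continuousOn_const
    exact (hb.sqrt).sub (Real.continuous_arctan.comp_continuousOn hb.sqrt)
  apply MeasureTheory.Integrable.mono hD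
    (hcont.aestronglyMeasurable measurableSet_Ioo)
  rw [MeasureTheory.ae_restrict_iff' measurableSet_Ioo]
  filter_upwards with φ hφ
  obtain ⟨hφ0, hφα⟩ := hφ
  set t := Real.cos φ - c with htdef
  have ht : 0 < t := htpos φ ⟨hφ0, hφα⟩
  have hsin0 : 0 ≤ Real.sin φ := Real.sin_nonneg_of_nonneg_of_le_pi hφ0.le (by linarith)
  have hsin1 : Real.sin φ ≤ 1 := Real.sin_le_one φ
  set X := Real.sqrt ((1 + c) / t) with hX
  have hX0 : 0 ≤ X := Real.sqrt_nonneg _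
  have harc : Real.arctan X ≤ X := arctan_le_self' hX0
  have harc0 : 0 ≤ Real.arctan X := arctan_nonneg' hX0
  have hfac : 0 ≤ 1 + (2 / π) * (X - Real.arctan X) := by
    have : 0 ≤ X - Real.arctan X := by linarith
    positivity
  -- bound on X
  have hKt : K * (α - φ) ≤ t := by
    have := cos_lower_bound α hα₀ hα₁ (φ := φ) ⟨hφ0.le, hφα.le⟩
    simpa [hK, htdef] using this
  have hXbound : X ≤ Real.sqrt ((1 + c) / K) * (α - φ) ^ (-(1/2) : ℝ) := by
    have hαφ : 0 < α - φ := by linarith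
    have h1 : (1 + c) / t ≤ (1 + c) / (K * (α - φ)) := by
      apply div_le_div_of_nonneg_left ha.le (by positivity) hKt
    have h2 : Real.sqrt ((1 + c) / (K * (α - φ)))
        = Real.sqrt ((1 + c) / K) * (α - φ) ^ (-(1/2) : ℝ) := by
      rw [show (1 + c) / (K * (α - φ)) = ((1 + c) / K) * (α - φ)⁻¹ by
          field_simp]
      rw [Real.sqrt_mul (by positivity), Real.sqrt_inv]
      congr 1
      rw [Real.rpow_neg hαφ.le, ← Real.sqrt_eq_rpow]
    rw [← h2]
    exact (Real.sqrt_le_sqrt h1).trans_eq rfl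
  have hgle : (1 + (2 / π) * (X - Real.arctan X)) * Real.sin φ
      ≤ 2 + C * (α - φ) ^ (-(1/2) : ℝ) := by
    have h3 : (1 + (2 / π) * (X - Real.arctan X)) * Real.sin φ
        ≤ 1 + (2 / π) * X := by
      calc (1 + (2 / π) * (X - Real.arctan X)) * Real.sin φ
          ≤ (1 + (2 / π) * (X - Real.arctan X)) * 1 :=
            mul_le_mul_of_nonneg_left hsin1 hfac
        _ = 1 + (2 / π) * (X - Real.arctan X) := mul_one _
        _ ≤ 1 + (2 / π) * X := by
            have : X - Real.arctan X ≤ X := by linarith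
            have h4 : (2 / π) * (X - Real.arctan X) ≤ (2 / π) * X :=
              mul_le_mul_of_nonneg_left this (by positivity)
            linarith
    have h5 : (2 / π) * X ≤ C * (α - φ) ^ (-(1/2) : ℝ) := by
      rw [hCdef, mul_assoc]
      exact mul_le_mul_of_nonneg_left hXbound (by positivity)
    linarith
  rw [Real.norm_eq_abs, Real.norm_eq_abs]
  rw [abs_of_nonneg (mul_nonneg hfac hsin0)]
  refine hgle.trans (le_abs_self _)

theorem integral_combined (α : ℝ) (hα₀ : 0 < α) (hα₁ : α < π) :
    ∫ φ in (0:ℝ)..α,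
      (1 + (2 / π) * (Real.sqrt ((1 + Real.cos α) / (Real.cos φ - Real.cos α))
        - Real.arctan (Real.sqrt ((1 + Real.cos α) / (Real.cos φ - Real.cos α)))))
        * Real.sin φ
      = (2 / π) * (Real.sin α + α) := by
  rw [intervalIntegral.integral_eq_sub_of_hasDerivAt_of_le hα₀.le
    (Gaux_cont α hα₀ hα₁) (fun φ hφ => Gaux_deriv α hα₀ hα₁ hφ)
    (integrand_integrable α hα₀ hα₁)]
  rw [Gaux_right, Gaux_left α hα₀ hα₁]
  ring
end

section
/- For h > 0 and 0 < α < π, the integral over φ from α to π of √(1 − cos α) · sin φ/(√(1 + h² − 2h cos φ)·√(cos α − cos φ)) dφ equals (2/√h)·sin(α/2)·log((1 + h + 2√h·cos(α/2))/√(1 + h² − 2h cos α)). -/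
open Real Set

theorem integral_point_charge_sqrt (h α : ℝ) (hh : 0 < h) (hα₀ : 0 < α) (hα₁ : α < π) :
    ∫ φ in α..π,
      Real.sqrt (1 - Real.cos α) * Real.sin φ
        / (Real.sqrt (1 + h ^ 2 - 2 * h * Real.cos φ)
          * Real.sqrt (Real.cos α - Real.cos φ))
      = (2 / Real.sqrt h) * Real.sin (α / 2)
        * Real.log ((1 + h + 2 * Real.sqrt h * Real.cos (α / 2))
          / Real.sqrt (1 + h ^ 2 - 2 * h * Real.cos α)) := by
  have hπ : (0:ℝ) < π := Real.pi_pos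
  have hr : (0:ℝ) < Real.sqrt h := Real.sqrt_pos.mpr hh
  have h2 : (0:ℝ) < Real.sqrt 2 := by positivity
  have hs2 : Real.sqrt (2*h) = Real.sqrt 2 * Real.sqrt h := Real.sqrt_mul (by norm_num) h
  have hss : Real.sqrt 2 * Real.sqrt 2 = 2 := Real.mul_self_sqrt (by norm_num)
  have hrr : Real.sqrt h * Real.sqrt h = h := Real.mul_self_sqrt hh.le
  -- positivity of A on the interval
  have hcosα : Real.cos α < 1 := by
    have := Real.cos_lt_cos_of_nonneg_of_le_pi le_rfl hα₁.le hα₀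
    simpa using this
  have hA : ∀ φ ∈ Icc α π, 0 < 1 + h ^ 2 - 2 * h * Real.cos φ := by
    intro φ hφ
    have h1 : Real.cos φ ≤ Real.cos α :=
      Real.cos_le_cos_of_nonneg_of_le_pi hα₀.le hφ.2 hφ.1
    nlinarith [sq_nonneg (1 - h)]
  have hB : ∀ φ ∈ Ioo α π, 0 < Real.cos α - Real.cos φ := by
    intro φ hφ
    have := Real.cos_lt_cos_of_nonneg_of_le_pi hα₀.le hφ.2.le hφ.1
    linarith
  set K := 2 / Real.sqrt h * Real.sin (α / 2) with hKdef
  set F : ℝ → ℝ := fun φ => K * Real.log (Real.sqrt (Real.cos α - Real.cos φ)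
      + Real.sqrt (1 + h ^ 2 - 2 * h * Real.cos φ) / Real.sqrt (2 * h)) with hFdef
  set g : ℝ → ℝ := fun φ => Real.sqrt (1 - Real.cos α) * Real.sin φ
        / (Real.sqrt (1 + h ^ 2 - 2 * h * Real.cos φ)
          * Real.sqrt (Real.cos α - Real.cos φ)) with hgdef
  -- u positive on Icc
  have hu : ∀ φ ∈ Icc α π, 0 < Real.sqrt (Real.cos α - Real.cos φ)
      + Real.sqrt (1 + h ^ 2 - 2 * h * Real.cos φ) / Real.sqrt (2 * h) := by
    intro φ hφ
    have h1 : 0 < Real.sqrt (1 + h ^ 2 - 2 * h * Real.cos φ) := Real.sqrt_pos.mpr (hA φ hφ)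
    have h2' : (0:ℝ) < Real.sqrt (2*h) := by rw [hs2]; positivity
    have := Real.sqrt_nonneg (Real.cos α - Real.cos φ)
    positivity
  -- sin(α/2) facts
  have hm : Real.sin (α/2) = Real.sqrt ((1 - Real.cos α)/2) :=
    Real.sin_half_eq_sqrt (by linarith) (by linarith)
  have hm0 : 0 < Real.sin (α/2) := by
    rw [hm]; apply Real.sqrt_pos.mpr; linarith
  have hsq1 : Real.sqrt (1 - Real.cos α) = Real.sqrt 2 * Real.sin (α/2) := by
    have h2' : (2:ℝ) * ((1 - Real.cos α)/2) = 1 - Real.cos α := by ring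
    rw [hm, ← Real.sqrt_mul (by norm_num : (0:ℝ) ≤ 2) ((1 - Real.cos α)/2), h2']
  -- continuity lemmas
  have hc1 : Continuous fun x : ℝ => Real.cos α - Real.cos x :=
    continuous_const.sub Real.continuous_cos
  have hc2 : Continuous fun x : ℝ => 1 + h ^ 2 - 2 * h * Real.cos x :=
    continuous_const.sub (continuous_const.mul Real.continuous_cos)
  -- continuity of F on Icc
  have hFcont : ContinuousOn F (Icc α π) := by
    apply ContinuousOn.mul continuousOn_const
    apply ContinuousOn.log
    · exact ((hc1.sqrt).add ((hc2.sqrt).div_const _)).continuousOn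
    · intro φ hφ; exact (hu φ hφ).ne'
  -- derivative of F
  have hFderiv : ∀ φ ∈ Ioo α π, HasDerivAt F (g φ) φ := by
    intro φ hφ
    have hφIcc : φ ∈ Icc α π := ⟨hφ.1.le, hφ.2.le⟩
    have hAφ := hA φ hφIcc
    have hBφ := hB φ hφ
    have ha : 0 < Real.sqrt (1 + h ^ 2 - 2 * h * Real.cos φ) := Real.sqrt_pos.mpr hAφ
    have hb : 0 < Real.sqrt (Real.cos α - Real.cos φ) := Real.sqrt_pos.mpr hBφ
    have huφ := hu φ hφIcc
    have hdB : HasDerivAt (fun x => Real.cos α - Real.cos x) (Real.sin φ) φ := by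
      simpa using (Real.hasDerivAt_cos φ).const_sub (Real.cos α)
    have hdA : HasDerivAt (fun x => 1 + h ^ 2 - 2 * h * Real.cos x) (2 * h * Real.sin φ) φ := by
      have := ((Real.hasDerivAt_cos φ).const_mul (2*h)).const_sub (1 + h^2)
      simpa using this
    have hdb : HasDerivAt (fun x => Real.sqrt (Real.cos α - Real.cos x))
        (Real.sin φ / (2 * Real.sqrt (Real.cos α - Real.cos φ))) φ :=
      hdB.sqrt hBφ.ne'
    have hda : HasDerivAt (fun x => Real.sqrt (1 + h ^ 2 - 2 * h * Real.cos x) / Real.sqrt (2*h))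
        ((2 * h * Real.sin φ / (2 * Real.sqrt (1 + h ^ 2 - 2 * h * Real.cos φ))) / Real.sqrt (2*h)) φ :=
      (hdA.sqrt hAφ.ne').div_const _
    have hdu := hdb.add hda
    have hdlog := hdu.log huφ.ne'
    have hdF := hdlog.const_mul K
    refine hdF.congr_deriv ?_
    symm
    -- algebraic identity
    rw [hgdef, hKdef]
    simp only [Pi.add_apply]
    set a := Real.sqrt (1 + h ^ 2 - 2 * h * Real.cos φ) with hadef
    set b := Real.sqrt (Real.cos α - Real.cos φ) with hbdef
    set r := Real.sqrt h with hrdef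
    set q := Real.sqrt 2 with hqdef
    rw [hsq1, hs2]
    have h2h : 2 * h = (q * r) * (q * r) := by
      rw [mul_mul_mul_comm, hss, hrr]
    rw [h2h]
    have hqr0 : q * r ≠ 0 := by positivity
    have hden : b + a / (q * r) ≠ 0 := by
      rw [hs2] at huφ; exact huφ.ne'
    field_simp
    ring
  -- nonnegativity of g
  have hgpos : ∀ φ ∈ Ioo α π, 0 ≤ g φ := by
    intro φ hφ
    have hsin : 0 ≤ Real.sin φ := Real.sin_nonneg_of_nonneg_of_le_pi (by linarith [hφ.1]) hφ.2.le
    rw [hgdef]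
    simp only []
    positivity
  have hint : IntervalIntegrable g MeasureTheory.volume α π := by
    apply intervalIntegral.intervalIntegrable_deriv_of_nonneg (g := F)
    · rwa [uIcc_of_le hα₁.le]
    · rwa [min_eq_left hα₁.le, max_eq_right hα₁.le]
    · rwa [min_eq_left hα₁.le, max_eq_right hα₁.le]
  have hFTC := intervalIntegral.integral_eq_sub_of_hasDeriv_right_of_le hα₁.le hFcont
    (fun x hx => (hFderiv x hx).hasDerivWithinAt) hint
  rw [show (∫ φ in α..π,
      Real.sqrt (1 - Real.cos α) * Real.sin φ
        / (Real.sqrt (1 + h ^ 2 - 2 * h * Real.cos φ)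
          * Real.sqrt (Real.cos α - Real.cos φ))) = ∫ φ in α..π, g φ from rfl, hFTC]
  -- compute F π - F α
  have hAα : 0 < 1 + h ^ 2 - 2 * h * Real.cos α := hA α ⟨le_rfl, hα₁.le⟩
  have hcoshalf : Real.cos (α/2) = Real.sqrt ((1 + Real.cos α)/2) :=
    Real.cos_half (by linarith) hα₁.le
  have hcos0 : 0 ≤ Real.cos (α/2) := by rw [hcoshalf]; positivity
  have hcos1 : Real.sqrt (1 + Real.cos α) = Real.sqrt 2 * Real.cos (α/2) := by
    have h2' : (2:ℝ) * ((1 + Real.cos α)/2) = 1 + Real.cos α := by ring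
    rw [hcoshalf, ← Real.sqrt_mul (by norm_num : (0:ℝ) ≤ 2) ((1 + Real.cos α)/2), h2']
  have h2h0 : (0:ℝ) < Real.sqrt (2*h) := by rw [hs2]; positivity
  have hFπ : F π = K * Real.log ((1 + h + 2 * Real.sqrt h * Real.cos (α/2)) / Real.sqrt (2*h)) := by
    rw [hFdef]
    simp only [Real.cos_pi]
    have e1 : Real.cos α - (-1) = 1 + Real.cos α := by ring
    have e2 : 1 + h^2 - 2*h*(-1) = (1+h)^2 := by ring
    rw [e1, e2, hcos1, Real.sqrt_sq (by linarith : (0:ℝ) ≤ 1 + h)]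
    congr 1
    congr 1
    rw [eq_div_iff h2h0.ne', hs2]
    field_simp
    linear_combination (Real.sqrt h * Real.cos (α/2)) * hss
  have hFα : F α = K * Real.log (Real.sqrt (1 + h ^ 2 - 2 * h * Real.cos α) / Real.sqrt (2*h)) := by
    rw [hFdef]
    simp only [sub_self, Real.sqrt_zero, zero_add]
  rw [hFπ, hFα, ← mul_sub, ← Real.log_div (by positivity) (by positivity)]
  have hsA : 0 < Real.sqrt (1 + h ^ 2 - 2 * h * Real.cos α) := Real.sqrt_pos.mpr hAα
  have harg : (1 + h + 2 * Real.sqrt h * Real.cos (α/2)) / Real.sqrt (2*h)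
      / (Real.sqrt (1 + h ^ 2 - 2 * h * Real.cos α) / Real.sqrt (2*h))
      = (1 + h + 2 * Real.sqrt h * Real.cos (α/2)) / Real.sqrt (1 + h ^ 2 - 2 * h * Real.cos α) := by
    field_simp
  rw [harg, hKdef]
end

section
/- For 0 < α < π and real t with α < t ≤ π, define g(t) = −(sin t/(12π·√(1 + cos t)))·(8a cos²t + 2(2a+3b) cos t − a + 3b + 3c). Then for Q(ξ) = a cos²ξ + b cos ξ + c, one has g(t) = (1/(4π))·(d/dt) ∫_t^π Q(ξ) sin ξ/√(cos t − cos ξ) dξ for t ∈ (α, π). -/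
open Real MeasureTheory

/-- Closed form for the Abel-type integral. -/
lemma abel_integral_closed_form (a b c : ℝ) {s : ℝ} (hs0 : 0 < s) (hsπ : s < π) :
    (∫ ξ in s..π, (a * Real.cos ξ ^ 2 + b * Real.cos ξ + c) * Real.sin ξ
        / Real.sqrt (Real.cos s - Real.cos ξ))
      = Real.sqrt (Real.cos s + 1) *
        (2 * (a * Real.cos s ^ 2 + b * Real.cos s + c)
          - (2/3) * (2 * a * Real.cos s + b) * (Real.cos s + 1)
          + (2/5) * a * (Real.cos s + 1) ^ 2) := by
  set x := Real.cos s with hxdef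
  set H : ℝ → ℝ := fun ξ => Real.sqrt (x - Real.cos ξ) *
      (2 * (a * x ^ 2 + b * x + c) - (2/3) * (2 * a * x + b) * (x - Real.cos ξ)
        + (2/5) * a * (x - Real.cos ξ) ^ 2) with hHdef
  have hxlt : ∀ ξ ∈ Set.Ioo s π, Real.cos ξ < x := fun ξ hξ =>
    Real.cos_lt_cos_of_nonneg_of_le_pi hs0.le hξ.2.le hξ.1
  have hcont : ContinuousOn H (Set.Icc s π) := by
    apply Continuous.continuousOn
    fun_prop
  have hvd : ∀ ξ : ℝ, HasDerivAt (fun u => x - Real.cos u) (Real.sin ξ) ξ := by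
    intro ξ
    simpa using (Real.hasDerivAt_cos ξ).const_sub x
  have hderiv : ∀ ξ ∈ Set.Ioo s π, HasDerivWithinAt H
      ((a * Real.cos ξ ^ 2 + b * Real.cos ξ + c) * Real.sin ξ
        / Real.sqrt (x - Real.cos ξ)) (Set.Ioi ξ) ξ := by
    intro ξ hξ
    have hv : 0 < x - Real.cos ξ := sub_pos.2 (hxlt ξ hξ)
    have h1 : HasDerivAt (fun u => Real.sqrt (x - Real.cos u))
        (1 / (2 * Real.sqrt (x - Real.cos ξ)) * Real.sin ξ) ξ :=
      (Real.hasDerivAt_sqrt hv.ne').comp ξ (hvd ξ)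
    have h2 : HasDerivAt (fun u => 2 * (a * x ^ 2 + b * x + c)
          - (2/3) * (2 * a * x + b) * (x - Real.cos u)
          + (2/5) * a * (x - Real.cos u) ^ 2)
        (-((2/3) * (2 * a * x + b) * Real.sin ξ)
          + (2/5) * a * (2 * (x - Real.cos ξ) * Real.sin ξ)) ξ := by
      have p1 := (((hvd ξ).const_mul ((2/3) * (2 * a * x + b))).const_sub
        (2 * (a * x ^ 2 + b * x + c)))
      have p2 := ((hvd ξ).pow 2).const_mul ((2/5) * a)
      convert p1.add p2 using 1
      · rfl
      · rfl
      · rfl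
      ring
    have hH := h1.mul h2
    have hyne : Real.sqrt (x - Real.cos ξ) ≠ 0 := (Real.sqrt_pos.2 hv).ne'
    have hy : Real.sqrt (x - Real.cos ξ) ^ 2 = x - Real.cos ξ := Real.sq_sqrt hv.le
    have heq : (1 / (2 * Real.sqrt (x - Real.cos ξ)) * Real.sin ξ) *
          (2 * (a * x ^ 2 + b * x + c) - (2/3) * (2 * a * x + b) * (x - Real.cos ξ)
            + (2/5) * a * (x - Real.cos ξ) ^ 2)
        + Real.sqrt (x - Real.cos ξ) *
          (-((2/3) * (2 * a * x + b) * Real.sin ξ)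
            + (2/5) * a * (2 * (x - Real.cos ξ) * Real.sin ξ))
        = (a * Real.cos ξ ^ 2 + b * Real.cos ξ + c) * Real.sin ξ
            / Real.sqrt (x - Real.cos ξ) := by
      set y := Real.sqrt (x - Real.cos ξ) with hy0
      have hc : Real.cos ξ = x - y ^ 2 := by linarith
      rw [← hy, hc]
      field_simp
      ring
    rw [heq] at hH
    exact hH.hasDerivWithinAt
  have hint : IntervalIntegrable (fun ξ => (a * Real.cos ξ ^ 2 + b * Real.cos ξ + c)
      * Real.sin ξ / Real.sqrt (x - Real.cos ξ)) volume s π := by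
    set M : ℝ := |a| + |b| + |c| with hM
    have hgderiv : ∀ ξ ∈ Set.Ioo s π, HasDerivAt (fun u => 2 * Real.sqrt (x - Real.cos u))
        (Real.sin ξ / Real.sqrt (x - Real.cos ξ)) ξ := by
      intro ξ hξ
      have hv : 0 < x - Real.cos ξ := sub_pos.2 (hxlt ξ hξ)
      have h1 : HasDerivAt (fun u => Real.sqrt (x - Real.cos u))
          (1 / (2 * Real.sqrt (x - Real.cos ξ)) * Real.sin ξ) ξ :=
        (Real.hasDerivAt_sqrt hv.ne').comp ξ (hvd ξ)
      have hyne : Real.sqrt (x - Real.cos ξ) ≠ 0 := (Real.sqrt_pos.2 hv).ne'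
      have := h1.const_mul 2
      convert this using 1
      · rfl
      · rfl
      field_simp
    have hgnn : ∀ ξ ∈ Set.Ioo s π, 0 ≤ Real.sin ξ / Real.sqrt (x - Real.cos ξ) := by
      intro ξ hξ
      exact div_nonneg (Real.sin_nonneg_of_nonneg_of_le_pi (le_of_lt (hs0.trans hξ.1))
        hξ.2.le) (Real.sqrt_nonneg _)
    have hgcont : ContinuousOn (fun u => 2 * Real.sqrt (x - Real.cos u)) (Set.Icc s π) := by
      apply Continuous.continuousOn
      fun_prop
    have hgint : IntegrableOn (fun ξ => Real.sin ξ / Real.sqrt (x - Real.cos ξ))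
        (Set.Ioc s π) volume :=
      intervalIntegral.integrableOn_deriv_of_nonneg hgcont hgderiv hgnn
    have hfint : IntegrableOn (fun ξ => (a * Real.cos ξ ^ 2 + b * Real.cos ξ + c)
        * Real.sin ξ / Real.sqrt (x - Real.cos ξ)) (Set.Ioc s π) volume := by
      apply MeasureTheory.Integrable.mono (hgint.const_mul M)
      · apply Measurable.aestronglyMeasurable
        apply Measurable.div
        · fun_prop
        · fun_prop
      · rw [MeasureTheory.ae_restrict_iff' measurableSet_Ioc]
        filter_upwards with ξ hξ
        have hgnn' : 0 ≤ Real.sin ξ / Real.sqrt (x - Real.cos ξ) :=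
          div_nonneg (Real.sin_nonneg_of_nonneg_of_le_pi (le_of_lt (hs0.trans hξ.1))
            hξ.2) (Real.sqrt_nonneg _)
        have hcos1 : |Real.cos ξ| ≤ 1 := Real.abs_cos_le_one ξ
        have hq : |a * Real.cos ξ ^ 2 + b * Real.cos ξ + c| ≤ M := by
          have h1 : |a * Real.cos ξ ^ 2| ≤ |a| := by
            rw [abs_mul, abs_pow]
            have hc2 : |Real.cos ξ| ^ 2 ≤ 1 := by nlinarith [abs_nonneg (Real.cos ξ)]
            exact mul_le_of_le_one_right (abs_nonneg a) hc2
          have h2 : |b * Real.cos ξ| ≤ |b| := by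
            rw [abs_mul]
            exact mul_le_of_le_one_right (abs_nonneg b) hcos1
          calc |a * Real.cos ξ ^ 2 + b * Real.cos ξ + c|
              ≤ |a * Real.cos ξ ^ 2| + |b * Real.cos ξ| + |c| := abs_add_three _ _ _
            _ ≤ M := by rw [hM]; linarith
        calc ‖(a * Real.cos ξ ^ 2 + b * Real.cos ξ + c) * Real.sin ξ
              / Real.sqrt (x - Real.cos ξ)‖
            = |a * Real.cos ξ ^ 2 + b * Real.cos ξ + c|
              * (Real.sin ξ / Real.sqrt (x - Real.cos ξ)) := by
              rw [Real.norm_eq_abs, mul_div_assoc, abs_mul, abs_of_nonneg hgnn']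
          _ ≤ M * (Real.sin ξ / Real.sqrt (x - Real.cos ξ)) :=
              mul_le_mul_of_nonneg_right hq hgnn'
          _ ≤ ‖M * (Real.sin ξ / Real.sqrt (x - Real.cos ξ))‖ := le_abs_self _
    rw [intervalIntegrable_iff, Set.uIoc_of_le hsπ.le]
    exact hfint
  have hftc := intervalIntegral.integral_eq_sub_of_hasDeriv_right_of_le hsπ.le hcont hderiv hint
  rw [hftc]
  have h0 : H s = 0 := by simp [hHdef, hxdef]
  have hπ : H π = Real.sqrt (x + 1) *
      (2 * (a * x ^ 2 + b * x + c) - (2/3) * (2 * a * x + b) * (x + 1)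
        + (2/5) * a * (x + 1) ^ 2) := by
    simp only [hHdef, Real.cos_pi, sub_neg_eq_add]
  rw [h0, hπ, sub_zero]

theorem g_formula_quadratic (a b c α : ℝ) (hα₀ : 0 < α) (hα₁ : α < π) :
    ∀ t ∈ Set.Ioo α π,
      -(Real.sin t / (12 * π * Real.sqrt (1 + Real.cos t)))
          * (8 * a * Real.cos t ^ 2 + 2 * (2 * a + 3 * b) * Real.cos t
            - a + 3 * b + 3 * c)
        = (1 / (4 * π)) * deriv (fun s : ℝ =>
            ∫ ξ in s..π, (a * Real.cos ξ ^ 2 + b * Real.cos ξ + c) * Real.sin ξ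
              / Real.sqrt (Real.cos s - Real.cos ξ)) t := by
  intro t ht
  obtain ⟨ht1, ht2⟩ := ht
  have ht0 : 0 < t := hα₀.trans ht1
  have hct : -1 < Real.cos t := by
    have := Real.cos_lt_cos_of_nonneg_of_le_pi ht0.le le_rfl ht2
    simpa [Real.cos_pi] using this
  have hw : 0 < Real.cos t + 1 := by linarith
  have hev : (fun s : ℝ => ∫ ξ in s..π, (a * Real.cos ξ ^ 2 + b * Real.cos ξ + c)
        * Real.sin ξ / Real.sqrt (Real.cos s - Real.cos ξ))
      =ᶠ[nhds t] (fun s => Real.sqrt (Real.cos s + 1) *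
        (2 * (a * Real.cos s ^ 2 + b * Real.cos s + c)
          - (2/3) * (2 * a * Real.cos s + b) * (Real.cos s + 1)
          + (2/5) * a * (Real.cos s + 1) ^ 2)) := by
    filter_upwards [isOpen_Ioo.mem_nhds (⟨ht0, ht2⟩ : t ∈ Set.Ioo 0 π)] with s hs
    exact abel_integral_closed_form a b c hs.1 hs.2
  rw [hev.deriv_eq]
  have hc := Real.hasDerivAt_cos t
  have h1 : HasDerivAt (fun s : ℝ => Real.cos s + 1) (-Real.sin t) t := hc.add_const 1
  have hsq : HasDerivAt (fun s : ℝ => Real.sqrt (Real.cos s + 1))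
      (1 / (2 * Real.sqrt (Real.cos t + 1)) * -Real.sin t) t :=
    (Real.hasDerivAt_sqrt hw.ne').comp t h1
  have hA : HasDerivAt (fun s : ℝ => a * Real.cos s ^ 2 + b * Real.cos s + c)
      (a * (2 * Real.cos t ^ 1 * -Real.sin t) + b * -Real.sin t) t :=
    (((hc.pow 2).const_mul a).add (hc.const_mul b)).add_const c
  have hB : HasDerivAt (fun s : ℝ => (2 * a * Real.cos s + b) * (Real.cos s + 1))
      ((2 * a) * -Real.sin t * (Real.cos t + 1) + (2 * a * Real.cos t + b) * -Real.sin t) t := by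
    have := ((hc.const_mul (2 * a)).add_const b).mul h1
    convert this using 1 <;> rfl
  have hC : HasDerivAt (fun s : ℝ => (Real.cos s + 1) ^ 2)
      (2 * (Real.cos t + 1) ^ 1 * -Real.sin t) t := h1.pow 2
  have hpoly : HasDerivAt (fun s : ℝ => 2 * (a * Real.cos s ^ 2 + b * Real.cos s + c)
        - (2/3) * (2 * a * Real.cos s + b) * (Real.cos s + 1)
        + (2/5) * a * (Real.cos s + 1) ^ 2)
      (2 * (a * (2 * Real.cos t ^ 1 * -Real.sin t) + b * -Real.sin t)
        - (2/3) * ((2 * a) * -Real.sin t * (Real.cos t + 1)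
            + (2 * a * Real.cos t + b) * -Real.sin t)
        + (2/5) * a * (2 * (Real.cos t + 1) ^ 1 * -Real.sin t)) t := by
    have p1 := hA.const_mul 2
    have p2 := hB.const_mul (2/3)
    have p3 := hC.const_mul ((2/5) * a)
    have := (p1.sub p2).add p3
    convert this using 1
    · rfl
    · rfl
    · funext s; simp only [Pi.add_apply, Pi.sub_apply]; ring
  have hG := hsq.mul hpoly
  erw [hG.deriv]
  have hw1 : Real.sqrt (1 + Real.cos t) = Real.sqrt (Real.cos t + 1) := by
    rw [add_comm]
  rw [hw1]
  set w := Real.sqrt (Real.cos t + 1) with hwdef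
  have hw0 : 0 < w := Real.sqrt_pos.2 hw
  have hw2 : w ^ 2 = Real.cos t + 1 := Real.sq_sqrt hw.le
  have hcos : Real.cos t = w ^ 2 - 1 := by linarith
  rw [hcos]
  have hπ0 : (π : ℝ) ≠ 0 := Real.pi_ne_zero
  field_simp
  ring
end

section
/- Let α ∈ (0, π) and suppose φ ↦ G(φ) is a continuous function on [0, α] and S: [0, α] → ℝ is continuous. If ∫_0^φ S(ζ)/√(cos ζ − cos φ) dζ = G(φ) for all φ ∈ (0, α], and G is continuously differentiable with G(0) = 0, then S(ζ) = (1/π)·(d/dζ) ∫_0^ζ G(φ) sin φ/√(cos φ − cos ζ) dφ for ζ ∈ (0, α). -/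
open Real Set MeasureTheory intervalIntegral

noncomputable def kerH (c d : ℝ) : ℝ → ℝ := fun u =>
  Real.arcsin ((Real.cos c + Real.cos d - 2 * Real.cos u) / (Real.cos c - Real.cos d))

lemma kerH_hasDerivAt {c d : ℝ} (hc : 0 ≤ c) (hcd : c < d) (hd : d ≤ π) {u : ℝ}
    (hu : u ∈ Ioo c d) :
    HasDerivAt (kerH c d)
      (Real.sin u / (Real.sqrt (Real.cos c - Real.cos u) * Real.sqrt (Real.cos u - Real.cos d))) u := by
  obtain ⟨hu1, hu2⟩ := hu
  set a := Real.cos c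
  set b := Real.cos d
  have hab : b < a := Real.cos_lt_cos_of_nonneg_of_le_pi hc hd hcd
  have h1 : b < Real.cos u := Real.cos_lt_cos_of_nonneg_of_le_pi (hc.trans hu1.le) hd hu2
  have h2 : Real.cos u < a := Real.cos_lt_cos_of_nonneg_of_le_pi hc (hu2.le.trans hd) hu1
  have hab0 : (0:ℝ) < a - b := by linarith
  set t := Real.cos u
  have hx1 : (a + b - 2 * t) / (a - b) ≠ -1 := by
    intro h; rw [div_eq_iff hab0.ne'] at h; nlinarith
  have hx2 : (a + b - 2 * t) / (a - b) ≠ 1 := by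
    intro h; rw [div_eq_iff hab0.ne'] at h; nlinarith
  have hinner : HasDerivAt (fun u => (a + b - 2 * Real.cos u) / (a - b))
      (2 * Real.sin u / (a - b)) u := by
    have := (Real.hasDerivAt_cos u).const_mul (2:ℝ)
    have h2 := ((hasDerivAt_const u (a + b)).sub this).div_const (a - b)
    simpa [mul_comm] using h2
  have harc := (Real.hasDerivAt_arcsin hx1 hx2).comp u hinner
  refine harc.congr_deriv ?_
  symm
  have key : (Real.sqrt ((a - t) * (t - b))) ^ 2 = (a - t) * (t - b) :=
    Real.sq_sqrt (by nlinarith)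
  have hsq : 1 - ((a + b - 2 * t) / (a - b)) ^ 2 = (2 * Real.sqrt ((a - t) * (t - b)) / (a - b))^2 := by
    field_simp
    nlinarith [key]
  have hs : Real.sqrt (1 - ((a + b - 2 * t) / (a - b)) ^ 2)
      = 2 * Real.sqrt ((a - t) * (t - b)) / (a - b) := by
    rw [hsq, Real.sqrt_sq (by positivity)]
  rw [hs, Real.sqrt_mul (by linarith)]
  have s1 : (0:ℝ) < Real.sqrt (a - t) := Real.sqrt_pos.2 (by linarith)
  have s2 : (0:ℝ) < Real.sqrt (t - b) := Real.sqrt_pos.2 (by linarith)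
  field_simp

lemma kernel_nonneg {c d : ℝ} (hc : 0 ≤ c) (hd : d ≤ π) {u : ℝ} (hu : u ∈ Ioo c d) :
    0 ≤ Real.sin u / (Real.sqrt (Real.cos c - Real.cos u) * Real.sqrt (Real.cos u - Real.cos d)) := by
  have : 0 ≤ Real.sin u := Real.sin_nonneg_of_nonneg_of_le_pi (hc.trans hu.1.le) (hu.2.le.trans hd)
  positivity

lemma kerH_cont {c d : ℝ} : ContinuousOn (kerH c d) (Icc c d) :=
  (Real.continuous_arcsin.comp (by continuity)).continuousOn

lemma kernel_intble {c d : ℝ} (hc : 0 ≤ c) (hcd : c < d) (hd : d ≤ π) :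
    IntervalIntegrable (fun u => Real.sin u /
      (Real.sqrt (Real.cos c - Real.cos u) * Real.sqrt (Real.cos u - Real.cos d))) volume c d := by
  rw [intervalIntegrable_iff_integrableOn_Ioc_of_le hcd.le]
  exact integrableOn_deriv_of_nonneg kerH_cont (fun x hx => kerH_hasDerivAt hc hcd hd hx)
    (fun x hx => kernel_nonneg hc hd hx)

lemma kernel_int {c d : ℝ} (hc : 0 ≤ c) (hcd : c < d) (hd : d ≤ π) :
    ∫ u in c..d, Real.sin u /
      (Real.sqrt (Real.cos c - Real.cos u) * Real.sqrt (Real.cos u - Real.cos d)) = π := by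
  rw [integral_eq_sub_of_hasDeriv_right_of_le hcd.le kerH_cont
    (fun x hx => (kerH_hasDerivAt hc hcd hd hx).hasDerivWithinAt)
    (kernel_intble hc hcd hd)]
  have hab : Real.cos d < Real.cos c := Real.cos_lt_cos_of_nonneg_of_le_pi hc hd hcd
  have h0 : Real.cos c - Real.cos d ≠ 0 := by linarith
  unfold kerH
  rw [show (Real.cos c + Real.cos d - 2 * Real.cos d) / (Real.cos c - Real.cos d) = 1 by
        field_simp; ring,
      show (Real.cos c + Real.cos d - 2 * Real.cos c) / (Real.cos c - Real.cos d) = -1 by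
        field_simp; ring,
      Real.arcsin_one, Real.arcsin_neg_one]
  ring

set_option maxHeartbeats 1000000 in
lemma abel_key (α : ℝ) (hα₁ : α < π) (G S : ℝ → ℝ)
    (hS : ContinuousOn S (Icc 0 α))
    (heq : ∀ φ ∈ Ioc (0:ℝ) α,
      ∫ ζ in (0:ℝ)..φ, S ζ / Real.sqrt (Real.cos ζ - Real.cos φ) = G φ)
    {z : ℝ} (hz : z ∈ Ioc 0 α) :
    ∫ φ in (0:ℝ)..z, G φ * Real.sin φ / Real.sqrt (Real.cos φ - Real.cos z)
      = π * ∫ t in (0:ℝ)..z, S t := by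
  obtain ⟨hz0, hzα⟩ := hz
  have hzπ : z ≤ π := le_of_lt (lt_of_le_of_lt hzα hα₁)
  set μ := volume.restrict (Ioo (0:ℝ) z) with hμ
  set k : ℝ → ℝ → ℝ := fun ζ φ =>
    Real.sin φ / (Real.sqrt (Real.cos ζ - Real.cos φ) * Real.sqrt (Real.cos φ - Real.cos z))
    with hk
  set f : ℝ → ℝ → ℝ := fun ζ φ => if ζ < φ then S ζ * k ζ φ else 0 with hf
  set U : Set (ℝ × ℝ) := {p : ℝ × ℝ | p.1 < p.2} with hU
  set B : Set (ℝ × ℝ) := Ioo (0:ℝ) z ×ˢ Ioo (0:ℝ) z with hB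
  have hUmeas : MeasurableSet U := (isOpen_lt continuous_fst continuous_snd).measurableSet
  set h : ℝ × ℝ → ℝ := fun p => S p.1 * k p.1 p.2 with hh
  -- continuity of h on U ∩ B
  have hconth : ContinuousOn h (U ∩ B) := by
    have hSsub : MapsTo (fun p : ℝ × ℝ => p.1) (U ∩ B) (Icc 0 α) := by
      rintro ⟨x, y⟩ ⟨_, hxB⟩
      exact ⟨hxB.1.1.le, hxB.1.2.le.trans hzα⟩
    have hS1 : ContinuousOn (fun p : ℝ × ℝ => S p.1) (U ∩ B) :=
      hS.comp continuous_fst.continuousOn hSsub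
    have hd1 : ContinuousOn (fun p : ℝ × ℝ =>
        Real.sqrt (Real.cos p.1 - Real.cos p.2) * Real.sqrt (Real.cos p.2 - Real.cos z)) (U ∩ B) :=
      (((Real.continuous_sqrt.comp ((Real.continuous_cos.comp continuous_fst).sub
        (Real.continuous_cos.comp continuous_snd))).mul (Real.continuous_sqrt.comp
        ((Real.continuous_cos.comp continuous_snd).sub continuous_const)))).continuousOn
    have hdne : ∀ p ∈ U ∩ B,
        Real.sqrt (Real.cos p.1 - Real.cos p.2) * Real.sqrt (Real.cos p.2 - Real.cos z) ≠ 0 := by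
      rintro ⟨x, y⟩ ⟨hxy, hxB⟩
      have h1 : Real.cos y < Real.cos x :=
        Real.cos_lt_cos_of_nonneg_of_le_pi hxB.1.1.le (hxB.2.2.le.trans hzπ) hxy
      have h2 : Real.cos z < Real.cos y :=
        Real.cos_lt_cos_of_nonneg_of_le_pi hxB.2.1.le hzπ hxB.2.2
      have s1 : (0:ℝ) < Real.sqrt (Real.cos x - Real.cos y) := Real.sqrt_pos.2 (by linarith)
      have s2 : (0:ℝ) < Real.sqrt (Real.cos y - Real.cos z) := Real.sqrt_pos.2 (by linarith)
      positivity
    exact hS1.mul ((Real.continuous_sin.comp continuous_snd).continuousOn.div hd1 hdne)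
  have haesm : AEStronglyMeasurable (Function.uncurry f) (μ.prod μ) := by
    have hfind : Function.uncurry f = U.indicator h := by
      funext p
      simp only [Function.uncurry, Set.indicator_apply, hf, hU, hh, Set.mem_setOf_eq]
    rw [hfind, hμ, Measure.prod_restrict, aestronglyMeasurable_indicator_iff hUmeas,
      Measure.restrict_restrict hUmeas]
    exact hconth.aestronglyMeasurable (hUmeas.inter (measurableSet_Ioo.prod measurableSet_Ioo))
  -- inner evaluation
  have hinner_eval : ∀ ζ ∈ Ioo (0:ℝ) z, ∀ c : ℝ,
      ∫ φ in Ioo (0:ℝ) z, (if ζ < φ then c * k ζ φ else 0) = c * π := by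
    intro ζ hζ c
    have hind : (fun φ => if ζ < φ then c * k ζ φ else 0)
        = (Ioi ζ).indicator (fun φ => c * k ζ φ) := by
      funext φ; simp [Set.indicator_apply, Set.mem_Ioi]
    rw [hind, setIntegral_indicator measurableSet_Ioi]
    have hset : Ioo (0:ℝ) z ∩ Ioi ζ = Ioo ζ z := by
      ext x; simp only [mem_inter_iff, mem_Ioo, mem_Ioi]
      constructor
      · rintro ⟨⟨_, h2⟩, h3⟩; exact ⟨h3, h2⟩
      · rintro ⟨h1, h2⟩; exact ⟨⟨hζ.1.trans h1, h2⟩, h1⟩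
    rw [hset, MeasureTheory.integral_const_mul, ← integral_Ioc_eq_integral_Ioo,
      ← intervalIntegral.integral_of_le hζ.2.le, kernel_int hζ.1.le hζ.2 hzπ]
  -- integrability of slices
  have hslice : ∀ ζ ∈ Ioo (0:ℝ) z, Integrable (fun φ => f ζ φ) μ := by
    intro ζ hζ
    have hind : (fun φ => f ζ φ) = (Ioi ζ).indicator (fun φ => S ζ * k ζ φ) := by
      funext φ; simp [hf, Set.indicator_apply, Set.mem_Ioi]
    rw [hind, hμ, integrable_indicator_iff measurableSet_Ioi,
      IntegrableOn, Measure.restrict_restrict measurableSet_Ioi]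
    have hset : Ioi ζ ∩ Ioo (0:ℝ) z = Ioo ζ z := by
      ext x; simp only [mem_inter_iff, mem_Ioo, mem_Ioi]
      constructor
      · rintro ⟨h3, ⟨_, h2⟩⟩; exact ⟨h3, h2⟩
      · rintro ⟨h1, h2⟩; exact ⟨h1, ⟨hζ.1.trans h1, h2⟩⟩
    rw [hset]
    have := (kernel_intble hζ.1.le hζ.2 hzπ).const_mul (S ζ)
    rw [intervalIntegrable_iff_integrableOn_Ioc_of_le hζ.2.le] at this
    exact this.mono_set Ioo_subset_Ioc_self
  -- norm integral evaluation
  have hnorm : ∀ ζ ∈ Ioo (0:ℝ) z, ∫ φ, ‖f ζ φ‖ ∂μ = |S ζ| * π := by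
    intro ζ hζ
    rw [hμ]
    have : EqOn (fun φ => ‖f ζ φ‖) (fun φ => if ζ < φ then |S ζ| * k ζ φ else 0)
        (Ioo (0:ℝ) z) := by
      intro φ hφ
      simp only [hf]
      by_cases hlt : ζ < φ
      · simp only [if_pos hlt, Real.norm_eq_abs, abs_mul]
        rw [abs_of_nonneg (kernel_nonneg hζ.1.le hzπ ⟨hlt, hφ.2⟩)]
      · simp [if_neg hlt]
    rw [setIntegral_congr_fun measurableSet_Ioo this]
    exact hinner_eval ζ hζ _
  -- product integrability
  have hSint : Integrable (fun ζ => |S ζ| * π) μ := by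
    have : IntegrableOn (fun ζ => |S ζ| * π) (Icc 0 α) volume :=
      (hS.abs.mul continuousOn_const).integrableOn_compact isCompact_Icc
    exact this.mono_set (fun x hx => ⟨hx.1.le, hx.2.le.trans hzα⟩)
  have hprodint : Integrable (Function.uncurry f) (μ.prod μ) := by
    refine (integrable_prod_iff haesm).2 ⟨?_, ?_⟩
    · filter_upwards [ae_restrict_mem measurableSet_Ioo] with ζ hζ
      exact hslice ζ hζ
    · refine hSint.congr ?_
      filter_upwards [ae_restrict_mem measurableSet_Ioo] with ζ hζ
      exact (hnorm ζ hζ).symm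
  -- now the computation
  have hswap := MeasureTheory.integral_integral_swap (f := f) hprodint
  have hLHS : ∫ ζ, ∫ φ, f ζ φ ∂μ ∂μ = π * ∫ t in (0:ℝ)..z, S t := by
    have : EqOn (fun ζ => ∫ φ, f ζ φ ∂μ) (fun ζ => S ζ * π) (Ioo (0:ℝ) z) := by
      intro ζ hζ
      exact hinner_eval ζ hζ (S ζ)
    rw [hμ, setIntegral_congr_fun measurableSet_Ioo this,
      intervalIntegral.integral_of_le hz0.le, integral_Ioc_eq_integral_Ioo]
    rw [MeasureTheory.integral_mul_const]
    ring
  have hRHS : ∫ φ, ∫ ζ, f ζ φ ∂μ ∂μ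
      = ∫ φ in (0:ℝ)..z, G φ * Real.sin φ / Real.sqrt (Real.cos φ - Real.cos z) := by
    rw [intervalIntegral.integral_of_le hz0.le, integral_Ioc_eq_integral_Ioo, hμ]
    refine setIntegral_congr_fun measurableSet_Ioo ?_
    intro φ hφ
    dsimp only
    have hφα : φ ∈ Ioc (0:ℝ) α := ⟨hφ.1, hφ.2.le.trans hzα⟩
    have hCz : Real.sin φ / Real.sqrt (Real.cos φ - Real.cos z) =
        Real.sin φ / Real.sqrt (Real.cos φ - Real.cos z) := rfl
    have hind : (fun ζ => f ζ φ) = (Iio φ).indicator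
        (fun ζ => (S ζ / Real.sqrt (Real.cos ζ - Real.cos φ)) *
          (Real.sin φ / Real.sqrt (Real.cos φ - Real.cos z))) := by
      funext ζ
      simp only [hf, hk, Set.indicator_apply, Set.mem_Iio]
      by_cases hlt : ζ < φ
      · rw [if_pos hlt, if_pos hlt]; ring
      · rw [if_neg hlt, if_neg hlt]
    rw [hind, setIntegral_indicator measurableSet_Iio]
    have hset : Ioo (0:ℝ) z ∩ Iio φ = Ioo 0 φ := by
      ext x; simp only [mem_inter_iff, mem_Ioo, mem_Iio]
      constructor
      · rintro ⟨⟨h1, _⟩, h3⟩; exact ⟨h1, h3⟩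
      · rintro ⟨h1, h2⟩; exact ⟨⟨h1, h2.trans hφ.2⟩, h2⟩
    rw [hset, MeasureTheory.integral_mul_const, ← integral_Ioc_eq_integral_Ioo,
      ← intervalIntegral.integral_of_le hφ.1.le, heq φ hφα]
    ring
  rw [← hRHS, ← hswap, hLHS]

theorem abel_inversion (α : ℝ) (hα₀ : 0 < α) (hα₁ : α < π)
    (G S : ℝ → ℝ)
    (hG : ContinuousOn G (Icc 0 α))
    (hS : ContinuousOn S (Icc 0 α))
    (hGC1 : ContDiffOn ℝ 1 G (Icc 0 α))
    (hG0 : G 0 = 0)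
    (heq : ∀ φ ∈ Ioc (0:ℝ) α,
      ∫ ζ in (0:ℝ)..φ, S ζ / Real.sqrt (Real.cos ζ - Real.cos φ) = G φ) :
    ∀ ζ ∈ Ioo (0:ℝ) α,
      S ζ = (1 / π) * deriv (fun z : ℝ =>
        ∫ φ in (0:ℝ)..z, G φ * Real.sin φ / Real.sqrt (Real.cos φ - Real.cos z)) ζ := by
  intro ζ₀ hζ₀
  have hIcc : Icc (0:ℝ) α ∈ nhds ζ₀ := Icc_mem_nhds hζ₀.1 hζ₀.2
  have hev : (fun z : ℝ => ∫ φ in (0:ℝ)..z,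
      G φ * Real.sin φ / Real.sqrt (Real.cos φ - Real.cos z))
      =ᶠ[nhds ζ₀] (fun z => π * ∫ t in (0:ℝ)..z, S t) := by
    filter_upwards [isOpen_Ioo.mem_nhds hζ₀] with z hz
    exact abel_key α hα₁ G S hS heq ⟨hz.1, hz.2.le⟩
  rw [Filter.EventuallyEq.deriv_eq hev]
  have hSderiv : HasDerivAt (fun z => ∫ t in (0:ℝ)..z, S t) (S ζ₀) ζ₀ := by
    apply intervalIntegral.integral_hasDerivAt_right
    · refine ContinuousOn.intervalIntegrable (hS.mono ?_)
      rw [uIcc_of_le hζ₀.1.le]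
      exact Icc_subset_Icc le_rfl hζ₀.2.le
    · exact ⟨Icc 0 α, hIcc, hS.aestronglyMeasurable measurableSet_Icc⟩
    · exact hS.continuousAt hIcc
  rw [(hSderiv.const_mul π).deriv]
  field_simp
end
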